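/- arXiv:2512.07470 — 6 statements merged into one kernel-verified Lean document; each statement's English description precedes it below -/
import Mathlib

section
/- If q belongs to the class E, then S_1(n,q) = O(1/n²) as n → ∞, where S_1(n,q) = Σ_{k,l ∈ ℤ} C_k C_l C_{−k−l} / ( k(k+l) ), the (absolutely convergent) sum being taken over pairs (k,l) with k ∉ {0, −2n} and k + l ∉ {0, −2n} (terms with l = 0 vanish since C_0 = 0). -/
open MeasureTheory Filter Asymptotics

/-- Cosine Fourier coefficients `C_k = (1/π) ∫₀^π q(x) cos(kx) dx`. -/
noncomputable def cosCoef (q : ℝ → ℂ) (k : ℤ) : ℂ :=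
  (1 / (Real.pi : ℂ)) * ∫ x in (0:ℝ)..Real.pi, q x * Real.cos ((k : ℝ) * x)

/-- The general term of `S₁(n,q)`: `C_k C_l C_{−k−l} / (k(k+l))` over pairs `(k,l)` with
`k ∉ {0, −2n}` and `k+l ∉ {0, −2n}`. -/
noncomputable def S1term (q : ℝ → ℂ) (n : ℕ) (kl : ℤ × ℤ) : ℂ :=
  if kl.1 ≠ 0 ∧ kl.1 ≠ -(2 * (n : ℤ)) ∧ kl.1 + kl.2 ≠ 0 ∧ kl.1 + kl.2 ≠ -(2 * (n : ℤ)) then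
    cosCoef q kl.1 * cosCoef q kl.2 * cosCoef q (-(kl.1 + kl.2)) /
      ((kl.1 : ℂ) * ((kl.1 : ℂ) + (kl.2 : ℂ)))
  else 0

/- ### Auxiliary material -/

lemma cosCoef_neg (q : ℝ → ℂ) (k : ℤ) : cosCoef q (-k) = cosCoef q k := by
  simp [cosCoef, neg_mul]

lemma norm_intCast_C (k : ℤ) : ‖((k:ℂ))‖ = |(k:ℝ)| := by
  rw [show ((k:ℂ)) = (((k:ℝ)):ℂ) by push_cast; ring, Complex.norm_real, Real.norm_eq_abs]

/-- the equiv `(k,m) ↦ (m-k, m)` -/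
def eqA : ℤ × ℤ ≃ ℤ × ℤ where
  toFun p := (p.2 - p.1, p.2)
  invFun p := (p.2 - p.1, p.2)
  left_inv p := by simp
  right_inv p := by simp

/-- the equiv `(k,m) ↦ (k, k-m)` -/
def eqB : ℤ × ℤ ≃ ℤ × ℤ where
  toFun p := (p.1, p.1 - p.2)
  invFun p := (p.1, p.1 - p.2)
  left_inv p := by simp
  right_inv p := by simp

/-- the equiv `(k,l) ↦ (k, k+l)` -/
def eqC : ℤ × ℤ ≃ ℤ × ℤ where
  toFun p := (p.1, p.1 + p.2)
  invFun p := (p.1, p.2 - p.1)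
  left_inv p := by simp
  right_inv p := by simp

/-- `S₁` in coordinates `(k, m) = (k, k+l)`, full domain `k ≠ 0, m ≠ 0`. -/
noncomputable def F0 (q : ℝ → ℂ) (p : ℤ × ℤ) : ℂ :=
  if p.1 ≠ 0 ∧ p.2 ≠ 0 then
    cosCoef q p.1 * cosCoef q (p.2 - p.1) * cosCoef q p.2 / ((p.1 : ℂ) * (p.2 : ℂ)) else 0

/-- Same, with the (redundant, by `C₀ = 0`) extra condition `m ≠ k`. -/
noncomputable def F1 (q : ℝ → ℂ) (p : ℤ × ℤ) : ℂ :=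
  if p.1 ≠ 0 ∧ p.2 ≠ 0 ∧ p.2 ≠ p.1 then
    cosCoef q p.1 * cosCoef q (p.2 - p.1) * cosCoef q p.2 / ((p.1 : ℂ) * (p.2 : ℂ)) else 0

/-- The symmetrized companion with denominator `k (m - k)`. -/
noncomputable def F3 (q : ℝ → ℂ) (p : ℤ × ℤ) : ℂ :=
  if p.1 ≠ 0 ∧ p.2 ≠ 0 ∧ p.2 ≠ p.1 then
    cosCoef q p.1 * cosCoef q (p.2 - p.1) * cosCoef q p.2 / ((p.1 : ℂ) * ((p.2 : ℂ) - (p.1 : ℂ)))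
  else 0

/-- `S₁(n)` in coordinates `(k,m)`. -/
noncomputable def Gt (q : ℝ → ℂ) (n : ℕ) (p : ℤ × ℤ) : ℂ :=
  if p.1 ≠ 0 ∧ p.1 ≠ -(2 * (n : ℤ)) ∧ p.2 ≠ 0 ∧ p.2 ≠ -(2 * (n : ℤ)) then
    cosCoef q p.1 * cosCoef q (p.2 - p.1) * cosCoef q p.2 / ((p.1 : ℂ) * (p.2 : ℂ)) else 0

/-- The boundary terms, with `k = -2n` or `m = -2n`. -/
noncomputable def Rt (q : ℝ → ℂ) (n : ℕ) (p : ℤ × ℤ) : ℂ :=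
  if (p.1 ≠ 0 ∧ p.2 ≠ 0) ∧ (p.1 = -(2 * (n : ℤ)) ∨ p.2 = -(2 * (n : ℤ))) then
    cosCoef q p.1 * cosCoef q (p.2 - p.1) * cosCoef q p.2 / ((p.1 : ℂ) * (p.2 : ℂ)) else 0

lemma summable_inv_sq : Summable (fun k : ℤ => 1/(k:ℝ)^2) :=
  Real.summable_one_div_int_pow.2 one_lt_two

set_option maxHeartbeats 800000 in
lemma summable_prod_inv_sq :
    Summable (fun p : ℤ × ℤ => (1/(p.1:ℝ)^2) * (1/(p.2:ℝ)^2)) := by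
  have h0 : ∀ k : ℤ, (0:ℝ) ≤ 1/(k:ℝ)^2 := fun k => by positivity
  exact summable_inv_sq.mul_of_nonneg summable_inv_sq h0 h0

lemma tsum_prod_mul {f g : ℤ → ℝ} (hf : Summable f) (hg : Summable g)
    (hf0 : ∀ k, 0 ≤ f k) (hg0 : ∀ k, 0 ≤ g k) :
    ∑' p : ℤ × ℤ, f p.1 * g p.2 = (∑' k, f k) * (∑' m, g m) := by
  have hs := hf.mul_of_nonneg hg hf0 hg0
  rw [Summable.tsum_prod' hs (fun k => hg.mul_left (f k))]
  simp_rw [tsum_mul_left]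
  rw [tsum_mul_right]

section Aux

variable {q : ℝ → ℂ} {M : ℝ}

/-- The basic term bound. -/
lemma term_bound (h1 : ∀ k : ℤ, ‖cosCoef q k‖ ≤ M)
    (h2 : ∀ k : ℤ, k ≠ 0 → ‖cosCoef q k‖ ≤ M / |(k:ℝ)|)
    {k m : ℤ} (hk : k ≠ 0) (hm : m ≠ 0) :
    ‖cosCoef q k * cosCoef q (m - k) * cosCoef q m / ((k : ℂ) * (m : ℂ))‖ ≤
      M ^ 3 * ((1/(k:ℝ)^2) * (1/(m:ℝ)^2)) := by
  have hM : 0 ≤ M := le_trans (norm_nonneg _) (h1 0)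
  have hka : (0:ℝ) < |(k:ℝ)| := by
    simp only [abs_pos]; exact_mod_cast hk
  have hma : (0:ℝ) < |(m:ℝ)| := by
    simp only [abs_pos]; exact_mod_cast hm
  rw [norm_div, norm_mul, norm_mul, norm_mul, norm_intCast_C, norm_intCast_C]
  have hb : ‖cosCoef q k‖ * ‖cosCoef q (m - k)‖ * ‖cosCoef q m‖ ≤
      (M / |(k:ℝ)|) * M * (M / |(m:ℝ)|) := by
    apply mul_le_mul (mul_le_mul (h2 k hk) (h1 (m-k)) (norm_nonneg _) (by positivity))
      (h2 m hm) (norm_nonneg _) (by positivity)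
  have key : (M / |(k:ℝ)| * M * (M / |(m:ℝ)|)) / (|(k:ℝ)| * |(m:ℝ)|)
      = M ^ 3 * ((1/(k:ℝ)^2) * (1/(m:ℝ)^2)) := by
    field_simp
    rw [sq_abs, sq_abs]
  calc ‖cosCoef q k‖ * ‖cosCoef q (m - k)‖ * ‖cosCoef q m‖ / (|(k:ℝ)| * |(m:ℝ)|)
      ≤ (M / |(k:ℝ)| * M * (M / |(m:ℝ)|)) / (|(k:ℝ)| * |(m:ℝ)|) :=
        (div_le_div_iff_of_pos_right (mul_pos hka hma)).2 hb
    _ = _ := key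

lemma norm_F1_le (h1 : ∀ k : ℤ, ‖cosCoef q k‖ ≤ M)
    (h2 : ∀ k : ℤ, k ≠ 0 → ‖cosCoef q k‖ ≤ M / |(k:ℝ)|) (p : ℤ × ℤ) :
    ‖F1 q p‖ ≤ M ^ 3 * ((1/(p.1:ℝ)^2) * (1/(p.2:ℝ)^2)) := by
  have hM : 0 ≤ M := le_trans (norm_nonneg _) (h1 0)
  unfold F1
  split_ifs with h
  · exact term_bound h1 h2 h.1 h.2.1
  · simp only [norm_zero]; positivity

lemma norm_F0_le (h1 : ∀ k : ℤ, ‖cosCoef q k‖ ≤ M)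
    (h2 : ∀ k : ℤ, k ≠ 0 → ‖cosCoef q k‖ ≤ M / |(k:ℝ)|) (p : ℤ × ℤ) :
    ‖F0 q p‖ ≤ M ^ 3 * ((1/(p.1:ℝ)^2) * (1/(p.2:ℝ)^2)) := by
  have hM : 0 ≤ M := le_trans (norm_nonneg _) (h1 0)
  unfold F0
  split_ifs with h
  · exact term_bound h1 h2 h.1 h.2
  · simp only [norm_zero]; positivity

lemma norm_Gt_le (h1 : ∀ k : ℤ, ‖cosCoef q k‖ ≤ M)
    (h2 : ∀ k : ℤ, k ≠ 0 → ‖cosCoef q k‖ ≤ M / |(k:ℝ)|) (n : ℕ) (p : ℤ × ℤ) :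
    ‖Gt q n p‖ ≤ M ^ 3 * ((1/(p.1:ℝ)^2) * (1/(p.2:ℝ)^2)) := by
  have hM : 0 ≤ M := le_trans (norm_nonneg _) (h1 0)
  unfold Gt
  split_ifs with h
  · exact term_bound h1 h2 h.1 h.2.2.1
  · simp only [norm_zero]; positivity

lemma norm_Rt_le (h1 : ∀ k : ℤ, ‖cosCoef q k‖ ≤ M)
    (h2 : ∀ k : ℤ, k ≠ 0 → ‖cosCoef q k‖ ≤ M / |(k:ℝ)|) (n : ℕ) (p : ℤ × ℤ) :
    ‖Rt q n p‖ ≤ M ^ 3 * ((1/(p.1:ℝ)^2) * (1/(p.2:ℝ)^2)) := by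
  have hM : 0 ≤ M := le_trans (norm_nonneg _) (h1 0)
  unfold Rt
  split_ifs with h
  · exact term_bound h1 h2 h.1.1 h.1.2
  · simp only [norm_zero]; positivity

lemma summable_norm_of_bnd {f : ℤ × ℤ → ℂ}
    (hb : ∀ p, ‖f p‖ ≤ M ^ 3 * ((1/(p.1:ℝ)^2) * (1/(p.2:ℝ)^2))) :
    Summable fun p => ‖f p‖ :=
  Summable.of_nonneg_of_le (fun _ => norm_nonneg _) hb (summable_prod_inv_sq.mul_left _)

lemma summable_of_bnd {f : ℤ × ℤ → ℂ}
    (hb : ∀ p, ‖f p‖ ≤ M ^ 3 * ((1/(p.1:ℝ)^2) * (1/(p.2:ℝ)^2))) : Summable f :=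
  (summable_norm_of_bnd hb).of_norm

/-- pointwise: `F1 + F1 ∘ eqA = F3`. -/
lemma F1_add_eqA (q : ℝ → ℂ) (p : ℤ × ℤ) :
    F1 q p + F1 q (eqA p) = F3 q p := by
  obtain ⟨k, m⟩ := p
  dsimp only [F1, F3, eqA, Equiv.coe_fn_mk]
  by_cases h : k ≠ 0 ∧ m ≠ 0 ∧ m ≠ k
  · obtain ⟨hk, hm, hmk⟩ := h
    rw [if_pos ⟨hk, hm, hmk⟩,
      if_pos (show m - k ≠ 0 ∧ m ≠ 0 ∧ m ≠ m - k from ⟨by omega, hm, by omega⟩),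
      if_pos ⟨hk, hm, hmk⟩]
    have e1 : m - (m - k) = k := by ring
    rw [e1]
    have hk' : (k:ℂ) ≠ 0 := by exact_mod_cast hk
    have hm' : (m:ℂ) ≠ 0 := by exact_mod_cast hm
    have hmk' : (m:ℂ) - (k:ℂ) ≠ 0 := by
      rw [sub_ne_zero]; exact_mod_cast hmk
    have ec : ((m - k : ℤ) : ℂ) = (m:ℂ) - (k:ℂ) := by push_cast; ring
    rw [ec]
    field_simp
    ring
  · rw [if_neg h, if_neg (show ¬(m - k ≠ 0 ∧ m ≠ 0 ∧ m ≠ m - k) by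
      intro ⟨h1, h2, h3⟩; exact h ⟨by omega, h2, by omega⟩), if_neg h, zero_add]

/-- pointwise: `F1 ∘ eqB = -F3`. -/
lemma F1_eqB (q : ℝ → ℂ) (p : ℤ × ℤ) :
    F1 q (eqB p) = -(F3 q p) := by
  obtain ⟨k, m⟩ := p
  dsimp only [F1, F3, eqB, Equiv.coe_fn_mk]
  by_cases h : k ≠ 0 ∧ m ≠ 0 ∧ m ≠ k
  · obtain ⟨hk, hm, hmk⟩ := h
    rw [if_pos (show k ≠ 0 ∧ k - m ≠ 0 ∧ k - m ≠ k from ⟨hk, by omega, by omega⟩),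
      if_pos ⟨hk, hm, hmk⟩]
    have e1 : k - m - k = -m := by ring
    have e2 : k - m = -(m - k) := by ring
    rw [e1, cosCoef_neg, e2, cosCoef_neg]
    have ec : ((-(m - k) : ℤ) : ℂ) = -((m:ℂ) - (k:ℂ)) := by push_cast; ring
    rw [ec, mul_neg, div_neg]
    ring
  · rw [if_neg (show ¬(k ≠ 0 ∧ k - m ≠ 0 ∧ k - m ≠ k) by
      intro ⟨h1, h2, h3⟩; exact h ⟨h1, by omega, by omega⟩), if_neg h, neg_zero]

/-- pointwise: `F0 = F1` (using `C₀ = 0`). -/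
lemma F0_eq_F1 (hC0 : cosCoef q 0 = 0) (p : ℤ × ℤ) : F0 q p = F1 q p := by
  obtain ⟨k, m⟩ := p
  simp only [F0, F1]
  by_cases h : k ≠ 0 ∧ m ≠ 0
  · by_cases hmk : m ≠ k
    · rw [if_pos h, if_pos ⟨h.1, h.2, hmk⟩]
    · rw [if_pos h, if_neg (by tauto)]
      have : m - k = 0 := by omega
      rw [this, hC0]
      simp
  · rw [if_neg h, if_neg (by tauto)]

/-- pointwise: `F0 = Gt n + Rt n`. -/
lemma F0_eq_Gt_add_Rt (q : ℝ → ℂ) (n : ℕ) (p : ℤ × ℤ) :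
    F0 q p = Gt q n p + Rt q n p := by
  obtain ⟨k, m⟩ := p
  simp only [F0, Gt, Rt]
  by_cases h0 : k ≠ 0 ∧ m ≠ 0
  · by_cases hb : k = -(2*(n:ℤ)) ∨ m = -(2*(n:ℤ))
    · rw [if_pos h0, if_neg (by tauto), if_pos ⟨h0, hb⟩, zero_add]
    · rw [if_pos h0, if_pos ⟨h0.1, by tauto, h0.2, by tauto⟩, if_neg (by tauto), add_zero]
  · rw [if_neg h0, if_neg (by tauto), if_neg (by tauto), add_zero]

/-- pointwise: `S1term q n = Gt q n ∘ eqC`. -/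
lemma S1term_eq_Gt (q : ℝ → ℂ) (n : ℕ) (p : ℤ × ℤ) :
    S1term q n p = Gt q n (eqC p) := by
  obtain ⟨k, l⟩ := p
  dsimp only [S1term, Gt, eqC, Equiv.coe_fn_mk]
  split_ifs with h
  · rw [show k + l - k = l by ring, ← cosCoef_neg q (k + l)]
    push_cast
    ring
  · rfl

end Aux

/-- If `q` belongs to the class `E` (i.e. `C_n = O(1/n)` and `C₀ = 0`),
then the sums `S₁(n,q)` converge absolutely and `S₁(n,q) = O(1/n²)` as `n → ∞`. -/
theorem stmt7 (q : ℝ → ℂ)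
    (hint : IntervalIntegrable q volume 0 Real.pi)
    (hC0 : cosCoef q 0 = 0)
    (hE : (fun n : ℕ => cosCoef q (n : ℤ)) =O[atTop] fun n : ℕ => (1 : ℝ) / n) :
    (∀ n : ℕ, 1 ≤ n → Summable (S1term q n)) ∧
    (fun n : ℕ => ∑' kl : ℤ × ℤ, S1term q n kl) =O[atTop] fun n : ℕ => 1 / (n : ℝ)^2 := by
  -- ### Step 1: uniform bounds on the coefficients
  set B : ℝ := (1 / Real.pi) * |∫ x in (0:ℝ)..Real.pi, ‖q x‖| with hBdef
  have hB0 : 0 ≤ B := by positivity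
  have hB : ∀ k : ℤ, ‖cosCoef q k‖ ≤ B := by
    intro k
    rw [cosCoef, norm_mul]
    have h1 : ‖(1 / (Real.pi : ℂ))‖ = 1 / Real.pi := by
      rw [norm_div, norm_one, Complex.norm_real, Real.norm_eq_abs,
        abs_of_pos Real.pi_pos]
    rw [h1]
    apply mul_le_mul_of_nonneg_left _ (by positivity)
    apply intervalIntegral.norm_integral_le_abs_of_norm_le _ hint.norm
    filter_upwards with t
    rw [norm_mul, Complex.norm_real, Real.norm_eq_abs]
    exact mul_le_of_le_one_right (norm_nonneg _) (Real.abs_cos_le_one _)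
  rw [isBigO_iff] at hE
  obtain ⟨c, hc⟩ := hE
  rw [eventually_atTop] at hc
  obtain ⟨N, hN⟩ := hc
  set N' : ℕ := max N 1 with hN'def
  set M : ℝ := max B (max (max c 0) (B * N')) with hMdef
  have hM0 : 0 ≤ M := le_trans hB0 (le_max_left _ _)
  have h1 : ∀ k : ℤ, ‖cosCoef q k‖ ≤ M := fun k => le_trans (hB k) (le_max_left _ _)
  have h2 : ∀ k : ℤ, k ≠ 0 → ‖cosCoef q k‖ ≤ M / |(k:ℝ)| := by
    intro k hk
    have habs : cosCoef q k = cosCoef q (k.natAbs : ℤ) := by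
      rcases Int.natAbs_eq k with h | h
      · rw [← h]
      · conv_lhs => rw [h]
        exact cosCoef_neg q _
    have hka : (0:ℝ) < |(k:ℝ)| := by
      simp only [abs_pos]; exact_mod_cast hk
    have hNA : ((k.natAbs : ℕ) : ℝ) = |(k:ℝ)| := by
      rw [Nat.cast_natAbs]
      push_cast
      ring
    rw [habs]
    by_cases hge : N ≤ k.natAbs
    · have hb := hN k.natAbs hge
      have hnrm : ‖(1:ℝ) / (k.natAbs : ℝ)‖ = 1 / |(k:ℝ)| := by
        rw [Real.norm_eq_abs, abs_of_nonneg (by positivity), hNA]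
      calc ‖cosCoef q (k.natAbs : ℤ)‖ ≤ c * ‖(1:ℝ) / (k.natAbs : ℝ)‖ := hb
        _ = c * (1 / |(k:ℝ)|) := by rw [hnrm]
        _ ≤ max c 0 * (1 / |(k:ℝ)|) := by
            apply mul_le_mul_of_nonneg_right (le_max_left _ _) (by positivity)
        _ ≤ M * (1 / |(k:ℝ)|) := by
            apply mul_le_mul_of_nonneg_right _ (by positivity)
            exact le_trans (le_max_left _ _) (le_max_right _ _)
        _ = M / |(k:ℝ)| := by rw [mul_one_div]
    · have hlt : (k.natAbs : ℝ) ≤ (N' : ℝ) := by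
        have : k.natAbs ≤ N' := le_trans (le_of_lt (Nat.lt_of_not_le hge)) (le_max_left _ _)
        exact_mod_cast this
      have hBN : B * |(k:ℝ)| ≤ B * N' := by
        apply mul_le_mul_of_nonneg_left _ hB0
        rw [← hNA]; exact hlt
      calc ‖cosCoef q (k.natAbs : ℤ)‖ ≤ B := hB _
        _ = B * |(k:ℝ)| / |(k:ℝ)| := by field_simp
        _ ≤ B * N' / |(k:ℝ)| := by
            exact div_le_div_of_nonneg_right hBN hka.le
        _ ≤ M / |(k:ℝ)| := by
            exact div_le_div_of_nonneg_right (le_trans (le_max_right _ _) (le_max_right _ _)) hka.le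
  -- ### Step 2: the unrestricted sum vanishes
  have sF1 : Summable (F1 q) := summable_of_bnd (norm_F1_le h1 h2)
  have sF1A : Summable (fun p => F1 q (eqA p)) := (eqA.summable_iff (f := F1 q)).2 sF1
  have hF3sum : ∑' p, F3 q p = 2 * ∑' p, F1 q p := by
    calc ∑' p, F3 q p = ∑' p, (F1 q p + F1 q (eqA p)) :=
          tsum_congr fun p => (F1_add_eqA q p).symm
      _ = (∑' p, F1 q p) + ∑' p, F1 q (eqA p) := Summable.tsum_add sF1 sF1A
      _ = 2 * ∑' p, F1 q p := by rw [eqA.tsum_eq (F1 q)]; ring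
  have hF1zero : ∑' p, F1 q p = 0 := by
    have hneg : ∑' p, F1 q p = -∑' p, F3 q p := by
      calc ∑' p, F1 q p = ∑' p, F1 q (eqB p) := (eqB.tsum_eq (F1 q)).symm
        _ = ∑' p, -(F3 q p) := tsum_congr (F1_eqB q)
        _ = -∑' p, F3 q p := by rw [tsum_neg]
    rw [hF3sum] at hneg
    linear_combination hneg / 3
  have hF0zero : ∑' p, F0 q p = 0 := by
    rw [tsum_congr (F0_eq_F1 hC0)]; exact hF1zero
  -- ### Step 3: per-n identities
  have sGt : ∀ n, Summable (Gt q n) := fun n => summable_of_bnd (norm_Gt_le h1 h2 n)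
  have sRt : ∀ n, Summable (Rt q n) := fun n => summable_of_bnd (norm_Rt_le h1 h2 n)
  have hGtRt : ∀ n, ∑' p, Gt q n p = -∑' p, Rt q n p := by
    intro n
    have hsplit : ∑' p, F0 q p = (∑' p, Gt q n p) + ∑' p, Rt q n p := by
      rw [tsum_congr (F0_eq_Gt_add_Rt q n)]
      exact Summable.tsum_add (sGt n) (sRt n)
    linear_combination hF0zero - hsplit
  have hS1 : ∀ n, S1term q n = fun p => Gt q n (eqC p) :=
    fun n => funext (S1term_eq_Gt q n)
  have sS1 : ∀ n : ℕ, Summable (S1term q n) := by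
    intro n
    rw [hS1 n]
    exact (eqC.summable_iff (f := Gt q n)).2 (sGt n)
  have hS1sum : ∀ n : ℕ, ∑' p, S1term q n p = -∑' p, Rt q n p := by
    intro n
    rw [hS1 n, eqC.tsum_eq (Gt q n)]
    exact hGtRt n
  refine ⟨fun n _ => sS1 n, ?_⟩
  -- ### Step 4: the O(1/n²) bound
  set S : ℝ := ∑' k : ℤ, 1/(k:ℝ)^2 with hSdef
  have hS0 : 0 ≤ S := tsum_nonneg fun k => by positivity
  rw [isBigO_iff]
  refine ⟨2 * M ^ 3 * S, ?_⟩
  filter_upwards [eventually_ge_atTop 1] with n hn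
  have hn0 : (0:ℝ) < (n:ℝ) := by exact_mod_cast hn
  have h2n : (-(2 * (n:ℤ)) : ℤ) ≠ 0 := by omega
  -- the two majorant functions
  set fa : ℤ → ℝ := fun k => if k = -(2 * (n:ℤ)) then (1:ℝ) else 0 with hfadef
  set ga : ℤ → ℝ := fun m => M ^ 3 * (1/(4*(n:ℝ)^2) * (1/(m:ℝ)^2)) with hgadef
  have hfa0 : ∀ k, 0 ≤ fa k := by
    intro k; simp only [hfadef]; split_ifs <;> norm_num
  have hga0 : ∀ m, 0 ≤ ga m := fun m => by simp only [hgadef]; positivity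
  have sfa : Summable fa := (hasSum_ite_eq _ _).summable
  have sga : Summable ga := (summable_inv_sq.mul_left _).mul_left _
  have hfat : ∑' k, fa k = 1 := tsum_ite_eq _ _
  have hgat : ∑' m, ga m = M ^ 3 * (1/(4*(n:ℝ)^2) * S) := by
    simp only [hgadef]
    rw [tsum_mul_left, tsum_mul_left]
  have key2n : (1:ℝ)/(((-(2 * (n:ℤ)) : ℤ)):ℝ)^2 = 1/(4*(n:ℝ)^2) := by
    push_cast
    ring_nf
  -- pointwise bound on Rt
  have hptw : ∀ p : ℤ × ℤ, ‖Rt q n p‖ ≤ fa p.1 * ga p.2 + ga p.1 * fa p.2 := by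
    intro p
    obtain ⟨k, m⟩ := p
    dsimp only
    have hnn : (0:ℝ) ≤ fa k * ga m + ga k * fa m :=
      add_nonneg (mul_nonneg (hfa0 _) (hga0 _)) (mul_nonneg (hga0 _) (hfa0 _))
    simp only [Rt]
    split_ifs with h
    · obtain ⟨⟨hk, hm⟩, hor⟩ := h
      have hb := term_bound h1 h2 hk hm
      rcases hor with hcase | hcase
      · have e : (1:ℝ)/(k:ℝ)^2 = 1/(4*(n:ℝ)^2) := by rw [hcase]; exact key2n
        calc ‖cosCoef q k * cosCoef q (m - k) * cosCoef q m / ((k : ℂ) * (m : ℂ))‖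
            ≤ M ^ 3 * ((1/(k:ℝ)^2) * (1/(m:ℝ)^2)) := hb
          _ = fa k * ga m := by
              simp only [hfadef, hgadef, if_pos hcase, one_mul]
              rw [e]; try ring
          _ ≤ fa k * ga m + ga k * fa m :=
              le_add_of_nonneg_right (mul_nonneg (hga0 _) (hfa0 _))
      · have e : (1:ℝ)/(m:ℝ)^2 = 1/(4*(n:ℝ)^2) := by rw [hcase]; exact key2n
        calc ‖cosCoef q k * cosCoef q (m - k) * cosCoef q m / ((k : ℂ) * (m : ℂ))‖
            ≤ M ^ 3 * ((1/(k:ℝ)^2) * (1/(m:ℝ)^2)) := hb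
          _ = ga k * fa m := by
              simp only [hfadef, hgadef, if_pos hcase, mul_one]
              rw [e]; try ring
          _ ≤ fa k * ga m + ga k * fa m :=
              le_add_of_nonneg_left (mul_nonneg (hfa0 _) (hga0 _))
    · simpa using hnn
  -- summability of the majorants
  have sWa : Summable (fun p : ℤ × ℤ => fa p.1 * ga p.2) :=
    sfa.mul_of_nonneg sga hfa0 hga0
  have sWb : Summable (fun p : ℤ × ℤ => ga p.1 * fa p.2) :=
    sga.mul_of_nonneg sfa hga0 hfa0
  have hWat : ∑' p : ℤ × ℤ, fa p.1 * ga p.2 = M ^ 3 * (1/(4*(n:ℝ)^2) * S) := by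
    rw [tsum_prod_mul sfa sga hfa0 hga0, hfat, hgat, one_mul]
  have hWbt : ∑' p : ℤ × ℤ, ga p.1 * fa p.2 = M ^ 3 * (1/(4*(n:ℝ)^2) * S) := by
    rw [tsum_prod_mul sga sfa hga0 hfa0, hfat, hgat, mul_one]
  -- assemble
  have hnormRt : Summable (fun p => ‖Rt q n p‖) := summable_norm_of_bnd (norm_Rt_le h1 h2 n)
  have hbound : ‖∑' p, Rt q n p‖ ≤ M ^ 3 * S / (2 * (n:ℝ)^2) := by
    calc ‖∑' p, Rt q n p‖ ≤ ∑' p, ‖Rt q n p‖ := norm_tsum_le_tsum_norm hnormRt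
      _ ≤ ∑' p : ℤ × ℤ, (fa p.1 * ga p.2 + ga p.1 * fa p.2) :=
          Summable.tsum_le_tsum hptw hnormRt (sWa.add sWb)
      _ = M ^ 3 * (1/(4*(n:ℝ)^2) * S) + M ^ 3 * (1/(4*(n:ℝ)^2) * S) := by
          rw [Summable.tsum_add sWa sWb, hWat, hWbt]
      _ = M ^ 3 * S / (2 * (n:ℝ)^2) := by
          field_simp
          ring
  have hrhs : ‖(1:ℝ) / (n:ℝ)^2‖ = 1 / (n:ℝ)^2 := by
    rw [Real.norm_eq_abs, abs_of_nonneg (by positivity)]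
  rw [hrhs]
  calc ‖∑' p, S1term q n p‖ = ‖∑' p, Rt q n p‖ := by rw [hS1sum n, norm_neg]
    _ ≤ M ^ 3 * S / (2 * (n:ℝ)^2) := hbound
    _ ≤ 2 * M ^ 3 * S * (1 / (n:ℝ)^2) := by
        rw [div_le_iff₀ (by positivity)]
        have : 0 ≤ M ^ 3 * S := by positivity
        calc M ^ 3 * S ≤ 4 * (M ^ 3 * S) := by linarith
          _ = 2 * M ^ 3 * S * (1 / (n:ℝ)^2) * (2 * (n:ℝ)^2) := by
              field_simp
              ring
end

section
/- If q ∈ L¹[0,π] with C_0 = 0, then for every positive integer n the series B_{1,n}(n²) = Σ_{k ∈ ℤ, k ≠ 0, k ≠ −2n} C_k C_{k+2n} / ( n² − (n+k)² ) converges absolutely and B_{1,n}(n²) = −(1/π) ∫₀^π Q(x)² cos(2nx) dx, where Q(x) = ∫₀ˣ q(t) dt. -/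
open MeasureTheory Filter Asymptotics

open Complex Set
open scoped InnerProductSpace

noncomputable section

local notation "π" => Real.pi


noncomputable def sinCoef (q : ℝ → ℂ) (k : ℤ) : ℂ :=
  (1 / (Real.pi : ℂ)) *
    ∫ x in (0:ℝ)..Real.pi, (∫ t in (0:ℝ)..x, q t) * Real.sin ((k : ℝ) * x)

lemma sinCoef_zero (q : ℝ → ℂ) : sinCoef q 0 = 0 := by simp [sinCoef]

lemma sinCoef_neg (q : ℝ → ℂ) (k : ℤ) : sinCoef q (-k) = -sinCoef q k := by
  have : ∀ x : ℝ, (∫ t in (0:ℝ)..x, q t) * (Real.sin (((-k : ℤ) : ℝ) * x) : ℂ)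
      = -((∫ t in (0:ℝ)..x, q t) * (Real.sin ((k : ℝ) * x) : ℂ)) := by
    intro x
    rw [show ((-k:ℤ):ℝ) * x = -((k:ℝ)*x) by push_cast; ring, Real.sin_neg,
      Complex.ofReal_neg]
    ring
  simp only [sinCoef, this, intervalIntegral.integral_neg]
  ring

lemma intq_zero (q : ℝ → ℂ) (hC0 : cosCoef q 0 = 0) : (∫ x in (0:ℝ)..π, q x) = 0 := by
  have hπ : (Real.pi : ℂ) ≠ 0 := by exact_mod_cast Real.pi_ne_zero
  have : cosCoef q 0 = (1 / (Real.pi : ℂ)) * ∫ x in (0:ℝ)..π, q x := by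
    unfold cosCoef
    norm_num
  rw [this] at hC0
  field_simp at hC0
  simpa using hC0

lemma cos_eq_k_sin (q : ℝ → ℂ) (hint : IntervalIntegrable q volume 0 π)
    (hC0 : cosCoef q 0 = 0) (k : ℤ) : cosCoef q k = k * sinCoef q k := by
  rcases eq_or_ne k 0 with rfl | hk
  · simpa using hC0
  have hπ : (0:ℝ) < π := Real.pi_pos
  have hπc : (Real.pi : ℂ) ≠ 0 := by exact_mod_cast Real.pi_ne_zero
  have hkR : (k:ℝ) ≠ 0 := by exact_mod_cast hk
  have hkC : (k:ℂ) ≠ 0 := by exact_mod_cast hk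
  set μ := volume.restrict (Ioc (0:ℝ) π) with hμ
  haveI : IsFiniteMeasure μ := by
    constructor
    rw [hμ, Measure.restrict_apply_univ]
    simp [Real.volume_Ioc]
  have hq : IntegrableOn q (Ioc 0 π) volume := hint.1
  set G : ℝ × ℝ → ℂ := fun p => if p.2 ≤ p.1 then q p.2 * (Real.sin ((k:ℝ) * p.1) : ℂ) else 0
    with hG
  have hsinc : Continuous fun p : ℝ × ℝ => (Real.sin ((k:ℝ) * p.1) : ℂ) :=
    Complex.continuous_ofReal.comp (Real.continuous_sin.comp (continuous_const.mul continuous_fst))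
  have hGeq : G = Set.indicator {p : ℝ × ℝ | p.2 ≤ p.1}
      (fun p => q p.2 * (Real.sin ((k:ℝ) * p.1) : ℂ)) := by
    ext p
    by_cases h : p.2 ≤ p.1 <;> simp [hG, Set.indicator, h]
  have hGmeas : AEStronglyMeasurable G (μ.prod μ) := by
    rw [hGeq]
    exact ((hq.aestronglyMeasurable.comp_snd).mul hsinc.aestronglyMeasurable).indicator
      (measurableSet_le measurable_snd measurable_fst)
  have hGint : Integrable G (μ.prod μ) := by
    have hbound : Integrable (fun p : ℝ × ℝ => (1:ℝ) * ‖q p.2‖) (μ.prod μ) :=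
      (integrable_const 1).mul_prod hq.norm
    refine Integrable.mono' hbound hGmeas (ae_of_all _ fun p => ?_)
    by_cases h : p.2 ≤ p.1
    · simp only [hG, if_pos h, norm_mul, Complex.norm_real, one_mul]
      exact mul_le_of_le_one_right (norm_nonneg _)
        (by rw [Real.norm_eq_abs]; exact Real.abs_sin_le_one _)
    · simp [hG, if_neg h, norm_nonneg]
  have hswap : (∫ x, (∫ t, G (x, t) ∂μ) ∂μ) = ∫ t, (∫ x, G (x, t) ∂μ) ∂μ := by
    have := MeasureTheory.integral_integral_swap (f := fun x t => G (x, t)) (μ := μ) (ν := μ)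
      (by
        have : Function.uncurry (fun x t => G (x, t)) = G := by
          funext p; simp [Function.uncurry]
        rw [this]; exact hGint)
    exact this
  -- step 1 : LHS
  have step1 : (∫ x in (0:ℝ)..π, (∫ t in (0:ℝ)..x, q t) * (Real.sin ((k:ℝ) * x) : ℂ))
      = ∫ x, (∫ t, G (x, t) ∂μ) ∂μ := by
    rw [intervalIntegral.integral_of_le hπ.le]
    refine setIntegral_congr_fun measurableSet_Ioc (fun x hx => ?_)
    have h1 : ∀ t, G (x, t) = Set.indicator (Iic x)
        (fun t => q t * (Real.sin ((k:ℝ) * x) : ℂ)) t := by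
      intro t
      by_cases h : t ≤ x <;> simp [hG, Set.indicator, h]
    rw [integral_congr_ae (ae_of_all _ h1), integral_indicator measurableSet_Iic,
      hμ, Measure.restrict_restrict measurableSet_Iic]
    have hset : Iic x ∩ Ioc 0 π = Ioc 0 x := by
      ext t
      constructor
      · rintro ⟨h1', h2', _⟩; exact ⟨h2', h1'⟩
      · rintro ⟨h1', h2'⟩; exact ⟨h2', h1', h2'.trans hx.2⟩
    rw [hset, integral_mul_const, intervalIntegral.integral_of_le hx.1.le]
  -- the sine integral
  have hsin : ∀ t : ℝ, (∫ x in t..π, Real.sin ((k:ℝ) * x))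
      = (Real.cos ((k:ℝ) * t) - Real.cos ((k:ℝ) * π)) / (k:ℝ) := by
    intro t
    rw [intervalIntegral.integral_comp_mul_left (fun x => Real.sin x) hkR, integral_sin,
      smul_eq_mul]
    field_simp
  -- step 2 : inner integral after swap
  have step2 : (∫ t, (∫ x, G (x, t) ∂μ) ∂μ)
      = ∫ t, q t * (((Real.cos ((k:ℝ) * t) - Real.cos ((k:ℝ) * π)) / (k:ℝ) : ℝ) : ℂ) ∂μ := by
    refine setIntegral_congr_fun measurableSet_Ioc (fun t ht => ?_)
    have h1 : ∀ x, G (x, t) = Set.indicator (Ici t)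
        (fun x => q t * (Real.sin ((k:ℝ) * x) : ℂ)) x := by
      intro x
      by_cases h : t ≤ x <;> simp [hG, Set.indicator, h]
    rw [integral_congr_ae (ae_of_all _ h1), integral_indicator measurableSet_Ici,
      hμ, Measure.restrict_restrict measurableSet_Ici]
    have hset : Ici t ∩ Ioc 0 π = Icc t π := by
      ext x
      constructor
      · rintro ⟨h1', _, h3'⟩; exact ⟨h1', h3'⟩
      · rintro ⟨h1', h2'⟩; exact ⟨h1', lt_of_lt_of_le ht.1 h1', h2'⟩
    rw [hset, integral_Icc_eq_integral_Ioc, ← intervalIntegral.integral_of_le ht.2,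
      intervalIntegral.integral_const_mul]
    congr 1
    rw [intervalIntegral.integral_ofReal, hsin t]
  -- step 3
  have hqcos : Integrable (fun t => q t * (Real.cos ((k:ℝ) * t) : ℂ)) μ := by
    have : Integrable (fun t => (Real.cos ((k:ℝ) * t) : ℂ) * q t) μ :=
      hq.bdd_mul (Complex.continuous_ofReal.comp
          (Real.continuous_cos.comp (continuous_const.mul continuous_id))).aestronglyMeasurable
        (c := 1) (ae_of_all _ fun x => by
          rw [Complex.norm_real, Real.norm_eq_abs]; exact Real.abs_cos_le_one _)
    simpa [mul_comm] using this
  have step3 : (∫ t, q t * (((Real.cos ((k:ℝ) * t) - Real.cos ((k:ℝ) * π)) / (k:ℝ) : ℝ) : ℂ) ∂μ)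
      = (π * cosCoef q k) / k := by
    have hrw : ∀ t, q t * (((Real.cos ((k:ℝ) * t) - Real.cos ((k:ℝ) * π)) / (k:ℝ) : ℝ) : ℂ)
        = (1/(k:ℂ)) * (q t * (Real.cos ((k:ℝ) * t) : ℂ))
          - ((Real.cos ((k:ℝ) * π) : ℂ) / (k:ℂ)) * q t := by
      intro t
      push_cast
      field_simp
    rw [integral_congr_ae (ae_of_all _ hrw),
      integral_sub (hqcos.const_mul _) (hq.const_mul _), integral_const_mul, integral_const_mul]
    have h1 : (∫ t, q t * (Real.cos ((k:ℝ) * t) : ℂ) ∂μ) = π * cosCoef q k := by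
      rw [cosCoef, intervalIntegral.integral_of_le hπ.le]
      field_simp
      rfl
    have h2 : (∫ t, q t ∂μ) = 0 := by
      have := intq_zero q hC0
      rwa [intervalIntegral.integral_of_le hπ.le] at this
    rw [h1, h2]
    ring
  have hfin : sinCoef q k = cosCoef q k / k := by
    rw [sinCoef, step1, hswap, step2, step3]
    field_simp
  rw [hfin]
  field_simp

instance fact2pi : Fact (0 < 2 * π) := ⟨by positivity⟩

lemma exp_diff (θ : ℝ) :
    Complex.exp (-(θ:ℂ) * Complex.I) - Complex.exp ((θ:ℂ) * Complex.I)
      = -2 * Complex.I * Real.sin θ := by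
  rw [Complex.exp_mul_I, Complex.exp_mul_I, Complex.cos_neg, Complex.sin_neg,
    ← Complex.ofReal_sin]
  ring

lemma exp_sum (θ : ℝ) :
    Complex.exp (-(θ:ℂ) * Complex.I) + Complex.exp ((θ:ℂ) * Complex.I)
      = 2 * Real.cos θ := by
  rw [Complex.exp_mul_I, Complex.exp_mul_I, Complex.cos_neg, Complex.sin_neg,
    ← Complex.ofReal_cos]
  ring

lemma symm_split (φ : ℝ → ℂ) (hφ : Continuous φ) :
    ∫ x in -π..π, φ x = ∫ x in (0:ℝ)..π, (φ x + φ (-x)) := by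
  have hadd : (∫ x in (0:ℝ)..π, (φ x + φ (-x)))
      = (∫ x in (0:ℝ)..π, φ x) + ∫ x in (0:ℝ)..π, φ (-x) :=
    intervalIntegral.integral_add (hφ.intervalIntegrable (μ := volume) _ _)
      ((hφ.comp continuous_neg).intervalIntegrable (μ := volume) _ _)
  rw [hadd]
  have h2 : (∫ x in (0:ℝ)..π, φ (-x)) = ∫ x in -π..(0:ℝ), φ x := by
    rw [intervalIntegral.integral_comp_neg]; simp
  rw [h2, add_comm]
  exact (intervalIntegral.integral_add_adjacent_intervals
    (hφ.intervalIntegrable (μ := volume) _ _) (hφ.intervalIntegrable _ _)).symm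

lemma fourier_eq (m : ℤ) (x : ℝ) :
    (fourier m (x : AddCircle (2 * π)) : ℂ) = Complex.exp ((m:ℂ) * x * Complex.I) := by
  rw [fourier_coe_apply]
  congr 1
  have : (Real.pi : ℂ) ≠ 0 := by exact_mod_cast Real.pi_ne_zero
  push_cast
  field_simp

lemma liftIco_coeff (f : ℝ → ℂ) (k : ℤ) :
    fourierCoeff (AddCircle.liftIco (2*π) (-π) f) k
      = (1/(2*(π:ℂ))) * ∫ x in -π..π, Complex.exp (-(k:ℂ) * x * Complex.I) * f x := by
  have hπ : (0:ℝ) < π := Real.pi_pos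
  rw [fourierCoeff_eq_intervalIntegral _ k (-π)]
  have hend : -π + 2*π = π := by ring
  rw [hend]
  have h1 : (∫ x in -π..π, (fourier (-k) (x : AddCircle (2*π)) : ℂ) • AddCircle.liftIco (2*π) (-π) f ↑x)
      = ∫ x in -π..π, Complex.exp (-(k:ℂ) * x * Complex.I) * f x := by
    rw [intervalIntegral.integral_of_le (by linarith), intervalIntegral.integral_of_le (by linarith),
      integral_Ioc_eq_integral_Ioo, integral_Ioc_eq_integral_Ioo]
    refine setIntegral_congr_fun measurableSet_Ioo (fun x hx => ?_)
    have hx' : x ∈ Ico (-π) (-π + 2*π) := by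
      rw [hend]; exact Ioo_subset_Ico_self hx
    rw [AddCircle.liftIco_coe_apply hx', fourier_eq, smul_eq_mul]
    push_cast
    ring_nf
  rw [h1, Complex.real_smul]
  push_cast
  ring

lemma coeff_odd (f : ℝ → ℂ) (hf : Continuous f) (hodd : ∀ x, f (-x) = -f x) (k : ℤ) :
    fourierCoeff (AddCircle.liftIco (2*π) (-π) f) k
      = -Complex.I * ((1/(π:ℂ)) * ∫ x in (0:ℝ)..π, f x * Real.sin ((k:ℝ) * x)) := by
  have hπc : (Real.pi : ℂ) ≠ 0 := by exact_mod_cast Real.pi_ne_zero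
  rw [liftIco_coeff]
  have hcont : Continuous fun x : ℝ => Complex.exp (-(k:ℂ) * x * Complex.I) * f x := by
    exact (Complex.continuous_exp.comp (by continuity)).mul hf
  rw [symm_split _ hcont]
  have h1 : ∀ x : ℝ, Complex.exp (-(k:ℂ) * x * Complex.I) * f x
      + Complex.exp (-(k:ℂ) * ((-x : ℝ) : ℂ) * Complex.I) * f (-x)
      = (-2 * Complex.I * (Real.sin ((k:ℝ) * x) : ℂ)) * f x := by
    intro x
    rw [hodd x, ← exp_diff ((k:ℝ) * x)]
    push_cast
    ring_nf
  rw [intervalIntegral.integral_congr (fun x _ => h1 x)]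
  have h2 : ∀ x : ℝ, (-2 * Complex.I * (Real.sin ((k:ℝ) * x) : ℂ)) * f x
      = (-2 * Complex.I) * (f x * (Real.sin ((k:ℝ) * x) : ℂ)) := fun x => by ring
  rw [intervalIntegral.integral_congr (fun x _ => h2 x), intervalIntegral.integral_const_mul]
  field_simp

lemma coeff_even (f : ℝ → ℂ) (hf : Continuous f) (heven : ∀ x, f (-x) = f x) (m : ℤ) :
    fourierCoeff (AddCircle.liftIco (2*π) (-π) f) m
      = (1/(π:ℂ)) * ∫ x in (0:ℝ)..π, f x * Real.cos ((m:ℝ) * x) := by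
  have hπc : (Real.pi : ℂ) ≠ 0 := by exact_mod_cast Real.pi_ne_zero
  rw [liftIco_coeff]
  have hcont : Continuous fun x : ℝ => Complex.exp (-(m:ℂ) * x * Complex.I) * f x := by
    exact (Complex.continuous_exp.comp (by continuity)).mul hf
  rw [symm_split _ hcont]
  have h1 : ∀ x : ℝ, Complex.exp (-(m:ℂ) * x * Complex.I) * f x
      + Complex.exp (-(m:ℂ) * ((-x : ℝ) : ℂ) * Complex.I) * f (-x)
      = (2 * (Real.cos ((m:ℝ) * x) : ℂ)) * f x := by
    intro x
    rw [heven x, ← exp_sum ((m:ℝ) * x)]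
    push_cast
    ring_nf
  rw [intervalIntegral.integral_congr (fun x _ => h1 x)]
  have h2 : ∀ x : ℝ, (2 * (Real.cos ((m:ℝ) * x) : ℂ)) * f x
      = (2:ℂ) * (f x * (Real.cos ((m:ℝ) * x) : ℂ)) := fun x => by ring
  rw [intervalIntegral.integral_congr (fun x _ => h2 x), intervalIntegral.integral_const_mul]
  field_simp

lemma liftIco_mul (f g : ℝ → ℂ) :
    (fun z => AddCircle.liftIco (2*π) (-π) f z * AddCircle.liftIco (2*π) (-π) g z)
      = AddCircle.liftIco (2*π) (-π) (fun x => f x * g x) := by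
  funext z
  simp [AddCircle.liftIco, Function.comp, Set.restrict]

section Parseval

lemma fourierCoeff_congr_ae' {T : ℝ} [Fact (0 < T)] {f g : AddCircle T → ℂ}
    (h : f =ᵐ[AddCircle.haarAddCircle] g) : fourierCoeff f = fourierCoeff g := by
  funext n
  unfold fourierCoeff
  exact integral_congr_ae (h.mono fun x hx => by dsimp only; rw [hx])

lemma fourierCoeff_conj {T : ℝ} [Fact (0 < T)] (h : AddCircle T → ℂ) (k : ℤ) :
    fourierCoeff (fun z => (starRingEnd ℂ) (h z)) k = (starRingEnd ℂ) (fourierCoeff h (-k)) := by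
  unfold fourierCoeff
  rw [← integral_conj]
  refine integral_congr_ae (ae_of_all _ fun t => ?_)
  dsimp only
  rw [smul_eq_mul, smul_eq_mul, map_mul, neg_neg, fourier_neg]

lemma fourierCoeff_mul_fourier {T : ℝ} [Fact (0 < T)] (h : AddCircle T → ℂ) (m k : ℤ) :
    fourierCoeff (fun z => fourier (-m) z * h z) k = fourierCoeff h (k + m) := by
  unfold fourierCoeff
  refine integral_congr_ae (ae_of_all _ fun t => ?_)
  dsimp only
  rw [smul_eq_mul, smul_eq_mul, ← mul_assoc, ← fourier_add, neg_add]

lemma parseval_conv {T : ℝ} [Fact (0 < T)] (h : AddCircle T → ℂ) (hc : Continuous h) (m : ℤ) :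
    Summable (fun k : ℤ => fourierCoeff h (-k) * fourierCoeff h (k + m)) ∧
    (∑' k : ℤ, fourierCoeff h (-k) * fourierCoeff h (k + m))
      = fourierCoeff (fun z => h z * h z) m := by
  set μ := @AddCircle.haarAddCircle T _
  set X : Lp ℂ 2 μ := ContinuousMap.toLp (E := ℂ) 2 μ ℂ ⟨fun z => (starRingEnd ℂ) (h z),
    Complex.continuous_conj.comp hc⟩ with hXdef
  set Y : Lp ℂ 2 μ := ContinuousMap.toLp (E := ℂ) 2 μ ℂ ⟨fun z => fourier (-m) z * h z,
    (map_continuous _).mul hc⟩ with hYdef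
  have hXcoe : (X : AddCircle T → ℂ) =ᵐ[μ] fun z => (starRingEnd ℂ) (h z) :=
    ContinuousMap.coeFn_toLp μ _
  have hYcoe : (Y : AddCircle T → ℂ) =ᵐ[μ] fun z => fourier (-m) z * h z :=
    ContinuousMap.coeFn_toLp μ _
  have hX : ∀ k : ℤ, ⟪X, (fourierBasis (T := T)) k⟫_ℂ = fourierCoeff h (-k) := by
    intro k
    rw [← inner_conj_symm, ← HilbertBasis.repr_apply_apply, fourierBasis_repr,
      fourierCoeff_congr_ae' hXcoe, fourierCoeff_conj]
    exact Complex.conj_conj _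
  have hY : ∀ k : ℤ, ⟪(fourierBasis (T := T)) k, Y⟫_ℂ = fourierCoeff h (k + m) := by
    intro k
    rw [← HilbertBasis.repr_apply_apply, fourierBasis_repr, fourierCoeff_congr_ae' hYcoe,
      fourierCoeff_mul_fourier]
  have hXY : ⟪X, Y⟫_ℂ = fourierCoeff (fun z => h z * h z) m := by
    rw [MeasureTheory.L2.inner_def]
    unfold fourierCoeff
    refine integral_congr_ae ?_
    filter_upwards [hXcoe, hYcoe] with t h1 h2
    rw [RCLike.inner_apply, h1, h2]
    simp only [smul_eq_mul, Complex.conj_conj]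
    ring
  constructor
  · have := (fourierBasis (T := T)).summable_inner_mul_inner X Y
    refine this.congr fun k => ?_
    rw [hX, hY]
  · have := (fourierBasis (T := T)).tsum_inner_mul_inner X Y
    rw [← hXY]
    rw [← this]
    exact tsum_congr fun k => by rw [hX, hY]

end Parseval
noncomputable def Qfun (q : ℝ → ℂ) : ℝ → ℂ :=
  fun x => ∫ t in (0:ℝ)..x, Set.indicator (Set.Ioc 0 π) q t

noncomputable def Ffun (q : ℝ → ℂ) : ℝ → ℂ := fun x => Qfun q x - Qfun q (-x)

lemma Qfun_cont (q : ℝ → ℂ) (hint : IntervalIntegrable q volume 0 π) :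
    Continuous (Qfun q) := by
  have h : Integrable (Set.indicator (Set.Ioc 0 π) q) volume :=
    hint.1.integrable_indicator measurableSet_Ioc
  exact intervalIntegral.continuous_primitive (fun a b => h.intervalIntegrable) 0

lemma Qfun_eq (q : ℝ → ℂ) {x : ℝ} (hx : x ∈ Icc (0:ℝ) π) :
    Qfun q x = ∫ t in (0:ℝ)..x, q t := by
  unfold Qfun
  rw [intervalIntegral.integral_of_le hx.1, intervalIntegral.integral_of_le hx.1]
  refine setIntegral_congr_fun measurableSet_Ioc (fun t ht => ?_)
  exact Set.indicator_of_mem (show t ∈ Set.Ioc 0 π from ⟨ht.1, ht.2.trans hx.2⟩) q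

lemma Qfun_neg (q : ℝ → ℂ) {x : ℝ} (hx : x ≤ 0) : Qfun q x = 0 := by
  unfold Qfun
  rw [intervalIntegral.integral_symm, intervalIntegral.integral_of_le hx]
  have : EqOn (Set.indicator (Set.Ioc 0 π) q) 0 (Ioc x 0) := by
    intro t ht
    exact Set.indicator_of_notMem (fun hc => absurd hc.1 (not_lt.2 ht.2)) q
  rw [setIntegral_congr_fun measurableSet_Ioc this]
  simp

lemma Qfun_pi (q : ℝ → ℂ) (hC0 : cosCoef q 0 = 0) : Qfun q π = 0 := by
  rw [Qfun_eq q ⟨Real.pi_pos.le, le_refl _⟩]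
  exact intq_zero q hC0

end

/-- If `q ∈ L¹[0,π]` with `C₀ = 0`, then for every positive integer `n`
the series `B_{1,n}(n²) = Σ_{k ≠ 0, −2n} C_k C_{k+2n}/(n² − (n+k)²)` converges absolutely
and equals `−(1/π)∫₀^π Q(x)² cos(2nx) dx`, where `Q(x) = ∫₀ˣ q(t) dt`. -/
theorem stmt9 (q : ℝ → ℂ)
    (hint : IntervalIntegrable q volume 0 Real.pi)
    (hC0 : cosCoef q 0 = 0)
    (n : ℕ) (hn : 1 ≤ n) :
    Summable (fun k : ℤ =>
      if k ≠ 0 ∧ k ≠ -(2 * (n : ℤ)) then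
        cosCoef q k * cosCoef q (k + 2 * n) / (((n : ℂ))^2 - ((n : ℂ) + (k : ℂ))^2) else 0) ∧
    (∑' k : ℤ,
      if k ≠ 0 ∧ k ≠ -(2 * (n : ℤ)) then
        cosCoef q k * cosCoef q (k + 2 * n) / (((n : ℂ))^2 - ((n : ℂ) + (k : ℂ))^2) else 0)
      = -(1 / (Real.pi : ℂ)) *
          ∫ x in (0:ℝ)..Real.pi, (∫ t in (0:ℝ)..x, q t)^2 * Real.cos (2 * (n : ℝ) * x) := by
  have hπ : (0:ℝ) < Real.pi := Real.pi_pos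
  set F : ℝ → ℂ := Ffun q with hF
  have hQc : Continuous (Qfun q) := Qfun_cont q hint
  have hFcont : Continuous F := hQc.sub (hQc.comp continuous_neg)
  have hFodd : ∀ x, F (-x) = -F x := by
    intro x
    simp only [hF, Ffun, neg_neg]
    ring
  have hFbc : F (-Real.pi) = F (-Real.pi + 2*Real.pi) := by
    have h1 : -Real.pi + 2*Real.pi = Real.pi := by ring
    rw [h1]
    simp only [hF, Ffun, neg_neg]
    rw [Qfun_pi q hC0, Qfun_neg q (show -Real.pi ≤ (0:ℝ) by linarith)]
  set h : AddCircle (2*Real.pi) → ℂ := AddCircle.liftIco (2*Real.pi) (-Real.pi) F with hh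
  have hcont : Continuous h := AddCircle.liftIco_continuous hFbc hFcont.continuousOn
  have hFQ : ∀ x ∈ Set.Icc (0:ℝ) Real.pi, F x = ∫ t in (0:ℝ)..x, q t := by
    intro x hx
    simp only [hF, Ffun]
    rw [Qfun_neg q (show -x ≤ (0:ℝ) by linarith [hx.1]), Qfun_eq q hx]
    ring
  have hcoef : ∀ k : ℤ, fourierCoeff h k = -Complex.I * sinCoef q k := by
    intro k
    rw [hh, coeff_odd F hFcont hFodd k, sinCoef]
    congr 2
    refine intervalIntegral.integral_congr (fun x hx => ?_)
    rw [uIcc_of_le hπ.le] at hx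
    rw [hFQ x hx]
  have hsq : fourierCoeff (fun z => h z * h z) (2*(n:ℤ))
      = (1/(Real.pi:ℂ)) *
        ∫ x in (0:ℝ)..Real.pi, (∫ t in (0:ℝ)..x, q t)^2 * Real.cos (2*(n:ℝ)*x) := by
    rw [hh, liftIco_mul, coeff_even (fun x => F x * F x) (hFcont.mul hFcont) (fun x => by show F (-x) * F (-x) = F x * F x; rw [hFodd]; ring) _]
    congr 1
    refine intervalIntegral.integral_congr (fun x hx => ?_)
    rw [uIcc_of_le hπ.le] at hx
    rw [hFQ x hx]
    have : (((2*(n:ℤ) : ℤ)):ℝ) = 2*(n:ℝ) := by push_cast; ring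
    rw [this]
    ring
  have hpar := parseval_conv h hcont (2*(n:ℤ))
  have hIs : ∀ a b : ℂ, -((-Complex.I * -a) * (-Complex.I * b)) = -(a * b) := by
    intro a b
    linear_combination (a*b) * Complex.I_mul_I
  have hterm : ∀ k : ℤ,
      (if k ≠ 0 ∧ k ≠ -(2 * (n : ℤ)) then
        cosCoef q k * cosCoef q (k + 2 * n) / (((n : ℂ))^2 - ((n : ℂ) + (k : ℂ))^2) else 0)
      = -(fourierCoeff h (-k) * fourierCoeff h (k + 2*(n:ℤ))) := by
    intro k
    rw [hcoef, hcoef, sinCoef_neg, hIs]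
    by_cases hk0 : k = 0
    · subst hk0
      simp [sinCoef_zero]
    by_cases hk2 : k = -(2*(n:ℤ))
    · subst hk2
      rw [if_neg (by tauto)]
      rw [show -(2*(n:ℤ)) + 2*(n:ℤ) = 0 by ring, sinCoef_zero]
      ring
    · rw [if_pos ⟨hk0, hk2⟩, cos_eq_k_sin q hint hC0 k, cos_eq_k_sin q hint hC0 (k + 2*n)]
      have hkC : (k:ℂ) ≠ 0 := Int.cast_ne_zero.2 hk0
      have hk2C : ((k:ℂ) + 2*(n:ℂ)) ≠ 0 := by
        have h0 : ((k + 2*(n:ℤ) : ℤ) : ℂ) ≠ 0 := Int.cast_ne_zero.2 (by omega)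
        push_cast at h0
        exact h0
      have hcast : ((k + 2*(n:ℤ) : ℤ) : ℂ) = (k:ℂ) + 2*(n:ℂ) := by push_cast; ring
      rw [hcast]
      have hden : ((n:ℂ))^2 - ((n:ℂ) + (k:ℂ))^2 = -((k:ℂ) * ((k:ℂ) + 2*(n:ℂ))) := by ring
      rw [hden]
      field_simp
  have hsum : Summable (fun k : ℤ =>
      if k ≠ 0 ∧ k ≠ -(2 * (n : ℤ)) then
        cosCoef q k * cosCoef q (k + 2 * n) / (((n : ℂ))^2 - ((n : ℂ) + (k : ℂ))^2) else 0) :=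
    (hpar.1.neg).congr (fun k => (hterm k).symm)
  refine ⟨hsum, ?_⟩
  rw [tsum_congr hterm, tsum_neg, hpar.2, hsq]
  ring
end

section
/- Let q be the Kronig–Penney potential, let n ≥ 1 satisfy Condition 1, let λ_n be a Dirichlet eigenvalue of L(q) with |λ_n − n²| ≤ M, and let Ψ_n be a corresponding eigenfunction with ∫₀^π |Ψ_n(x)|² dx = 1. Then ∫₀^π Ψ_n(x) sin(nx) dx ≠ 0. -/
open MeasureTheory Filter Asymptotics

/-- Cosine Fourier coefficients `C_k = (1/π) ∫₀^π q(x) cos(kx) dx` of a real potential. -/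
noncomputable def cosCoefR (q : ℝ → ℝ) (k : ℤ) : ℝ :=
  (1 / Real.pi) * ∫ x in (0:ℝ)..Real.pi, q x * Real.cos ((k : ℝ) * x)

/-- `λ` is a Dirichlet eigenvalue of `L(q) = −d²/dx² + q` on `[0,π]` with eigenfunction `y`:
`y` is nontrivial, `y, y′` are absolutely continuous, `−y″ + q y = λ y` a.e. and
`y(0) = y(π) = 0`.  Absolute continuity and the a.e. differential equation are expressed
in their equivalent integral form. -/
def IsDirichletEigenpair (q : ℝ → ℂ) (lam : ℂ) (y : ℝ → ℂ) : Prop :=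
  ∃ g : ℝ → ℂ,
    (∃ x ∈ Set.Icc (0:ℝ) Real.pi, y x ≠ 0) ∧
    IntervalIntegrable g volume 0 Real.pi ∧
    IntervalIntegrable (fun t => (q t - lam) * y t) volume 0 Real.pi ∧
    (∀ x ∈ Set.Icc (0:ℝ) Real.pi, y x = y 0 + ∫ t in (0:ℝ)..x, g t) ∧
    (∀ x ∈ Set.Icc (0:ℝ) Real.pi, g x = g 0 + ∫ t in (0:ℝ)..x, (q t - lam) * y t) ∧
    y 0 = 0 ∧ y Real.pi = 0

/-- `λ` is a Dirichlet eigenvalue of `L(q)` on `[0,π]`. -/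
def IsDirichletEV (q : ℝ → ℂ) (lam : ℂ) : Prop :=
  ∃ y : ℝ → ℂ, IsDirichletEigenpair q lam y

/-- Condition 1 for the index `n`: `M ≤ 1/2` if `n = 1`, and `M < (2n−1)/2` if `n > 1`. -/
def Cond1 (M : ℝ) (n : ℕ) : Prop :=
  (n = 1 → M ≤ 1 / 2) ∧ (1 < n → M < (2 * (n : ℝ) - 1) / 2)

/-- The partial sum `n_1 + ⋯ + n_{j}` of the multi-index `v = (n_1, …, n_k)`. -/
def psum {k : ℕ} (v : Fin k → ℤ) (j : Fin k) : ℤ :=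
  ∑ i ∈ Finset.univ.filter (fun i => i ≤ j), v i

/-- Admissibility of a multi-index: every partial sum avoids `0` and `−2n`. -/
def adm (n : ℕ) {k : ℕ} (v : Fin k → ℤ) : Prop :=
  ∀ j : Fin k, psum v j ≠ 0 ∧ psum v j ≠ -(2 * (n : ℤ))

instance (n : ℕ) {k : ℕ} (v : Fin k → ℤ) : Decidable (adm n v) := by
  unfold adm; infer_instance

/-- The general term of `a_k(λ)`:
`C_{n_1}⋯C_{n_k}(C_{n_1+⋯+n_k} − C_{n_1+⋯+n_k+2n}) / Π_j (λ − (n+n_1+⋯+n_j)²)`. -/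
noncomputable def aTerm (C : ℤ → ℝ) (n : ℕ) (k : ℕ) (lam : ℝ) (v : Fin k → ℤ) : ℝ :=
  if adm n v then
    ((∏ i, C (v i)) * (C (∑ i, v i) - C ((∑ i, v i) + 2 * n))) /
      ∏ j, (lam - ((n : ℝ) + ((psum v j : ℤ) : ℝ))^2)
  else 0

/-- `a_k(λ)`, the full series over `ℤ^k` of admissible multi-indices. -/
noncomputable def aSum (C : ℤ → ℝ) (n k : ℕ) (lam : ℝ) : ℝ :=
  ∑' v : Fin k → ℤ, aTerm C n k lam v

/-- The truncated sum `a_{r,k,n}(λ)`, over multi-indices with entries in `[−r, r]`. -/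
noncomputable def aTrunc (C : ℤ → ℝ) (n k r : ℕ) (lam : ℝ) : ℝ :=
  ∑' v : Fin k → ℤ,
    if ∀ i, -(r : ℤ) ≤ v i ∧ v i ≤ (r : ℤ) then aTerm C n k lam v else 0

/-- `g_n(λ) = −C_{2n} + Σ_{k=1}^{s} a_{r,k,n}(λ)`. -/
noncomputable def gFun (C : ℤ → ℝ) (n r s : ℕ) (lam : ℝ) : ℝ :=
  -C (2 * n) + ∑ k ∈ Finset.Icc 1 s, aTrunc C n k r lam


section Aux

open MeasureTheory intervalIntegral

/-- Bounded a.e.-strongly-measurable functions are interval integrable. -/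
lemma bddIntInt {E : Type*} [NormedAddCommGroup E] {f : ℝ → E} {K : ℝ} (a b : ℝ)
    (hm : AEStronglyMeasurable f volume) (hK : ∀ x, ‖f x‖ ≤ K) :
    IntervalIntegrable f volume a b := by
  rw [intervalIntegrable_iff]
  haveI : Fact ((volume (Set.uIoc a b)) < ⊤) := ⟨measure_Ioc_lt_top⟩
  exact Integrable.mono' (integrable_const K) hm.restrict (ae_of_all _ hK)

/-- Fubini for the triangle `0 ≤ t ≤ x ≤ π`. -/
lemma triangle_swap (f φ : ℝ → ℂ) (hf : Measurable f)
    (hfi : IntervalIntegrable f volume 0 Real.pi) (hφ : Continuous φ) :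
    ∫ x in (0:ℝ)..Real.pi, (∫ t in (0:ℝ)..x, f t) * φ x
      = ∫ t in (0:ℝ)..Real.pi, f t * ∫ x in t..Real.pi, φ x := by
  have hpi : (0:ℝ) ≤ Real.pi := Real.pi_pos.le
  set μ := volume.restrict (Set.Ioc (0:ℝ) Real.pi) with hμdef
  have hfint : IntegrableOn f (Set.Ioc (0:ℝ) Real.pi) volume := by
    simpa [intervalIntegrable_iff, Set.uIoc_of_le hpi] using hfi
  have hφint : IntegrableOn φ (Set.Ioc (0:ℝ) Real.pi) volume := hφ.integrableOn_Ioc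
  set S : Set (ℝ × ℝ) := {p : ℝ × ℝ | p.2 ≤ p.1} with hS
  set Kf : ℝ × ℝ → ℂ := S.indicator (fun p => φ p.1 * f p.2) with hKf
  have hSmeas : MeasurableSet S := measurableSet_le measurable_snd measurable_fst
  have hKint : Integrable Kf (μ.prod μ) := (Integrable.mul_prod hφint hfint).indicator hSmeas
  have hswap : (∫ x, (∫ t, Kf (x, t) ∂μ) ∂μ) = ∫ t, (∫ x, Kf (x, t) ∂μ) ∂μ := by
    apply MeasureTheory.integral_integral_swap (f := fun x t => Kf (x, t))
    exact hKint
  have hL : (∫ x in (0:ℝ)..Real.pi, (∫ t in (0:ℝ)..x, f t) * φ x)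
      = ∫ x, (∫ t, Kf (x, t) ∂μ) ∂μ := by
    rw [intervalIntegral.integral_of_le hpi]
    refine setIntegral_congr_fun measurableSet_Ioc (fun x hx => ?_)
    have h1 : (∫ t, Kf (x, t) ∂μ)
        = ∫ t in Set.Ioc (0:ℝ) Real.pi, (Set.Ioc (0:ℝ) x).indicator (fun t => φ x * f t) t := by
      refine setIntegral_congr_fun measurableSet_Ioc (fun t ht => ?_)
      simp [hKf, hS, Set.indicator_apply, Set.mem_Ioc, ht.1]
    rw [h1, setIntegral_indicator measurableSet_Ioc, Set.Ioc_inter_Ioc,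
      MeasureTheory.integral_const_mul]
    simp only [max_self, min_eq_right hx.2]
    rw [← intervalIntegral.integral_of_le hx.1.le]
    ring
  have hR : (∫ t in (0:ℝ)..Real.pi, f t * ∫ x in t..Real.pi, φ x)
      = ∫ t, (∫ x, Kf (x, t) ∂μ) ∂μ := by
    rw [intervalIntegral.integral_of_le hpi]
    refine setIntegral_congr_fun measurableSet_Ioc (fun t ht => ?_)
    have h1 : (∫ x, Kf (x, t) ∂μ)
        = ∫ x, (Set.Ioc t Real.pi).indicator (fun x => φ x * f t) x ∂μ := by
      refine integral_congr_ae ?_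
      have hnull : μ {t} = 0 := by
        refine le_antisymm (le_trans (Measure.restrict_le_self _) ?_) zero_le
        simp
      have h2 : ∀ᵐ x ∂μ, x ≠ t := by
        rw [ae_iff]
        simpa using hnull
      filter_upwards [ae_restrict_mem measurableSet_Ioc, h2] with x hx hxt
      have hiff : (t ≤ x) = (t < x) :=
        propext ⟨fun h => h.lt_of_ne (Ne.symm hxt), le_of_lt⟩
      simp [hKf, hS, Set.indicator_apply, Set.mem_Ioc, hx.2, hiff]
    rw [h1, setIntegral_indicator measurableSet_Ioc, Set.Ioc_inter_Ioc,
      MeasureTheory.integral_mul_const]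
    simp only [min_self, max_eq_right ht.1.le]
    rw [← intervalIntegral.integral_of_le ht.2]
    ring
  rw [hL, hR]; exact hswap

lemma sin_int (κ t s : ℝ) (hκ : κ ≠ 0) :
    ∫ x in t..s, ((Real.sin (κ * x) : ℂ)) =
      ((Real.cos (κ * t) - Real.cos (κ * s)) / κ : ℝ) := by
  rw [intervalIntegral.integral_ofReal]
  norm_cast
  have : ∀ x : ℝ, HasDerivAt (fun y => -Real.cos (κ * y) / κ) (Real.sin (κ * x)) x := by
    intro x
    have h1 : HasDerivAt (fun y => κ * y) κ x := by
      simpa using (hasDerivAt_id x).const_mul κ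
    have := ((Real.hasDerivAt_cos (κ * x)).comp x h1).neg.div_const κ
    simpa [mul_comm, mul_div_assoc, mul_div_cancel_left₀ _ hκ] using this
  rw [intervalIntegral.integral_eq_sub_of_hasDerivAt (fun x _ => this x)
    ((Real.continuous_sin.comp (continuous_const.mul continuous_id)).intervalIntegrable t s)]
  field_simp
  ring

lemma cos_int (κ t s : ℝ) (hκ : κ ≠ 0) :
    ∫ x in t..s, ((Real.cos (κ * x) : ℂ)) =
      ((Real.sin (κ * s) - Real.sin (κ * t)) / κ : ℝ) := by
  rw [intervalIntegral.integral_ofReal]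
  norm_cast
  have : ∀ x : ℝ, HasDerivAt (fun y => Real.sin (κ * y) / κ) (Real.cos (κ * x)) x := by
    intro x
    have h1 : HasDerivAt (fun y => κ * y) κ x := by
      simpa using (hasDerivAt_id x).const_mul κ
    have := ((Real.hasDerivAt_sin (κ * x)).comp x h1).div_const κ
    simpa [mul_comm, mul_div_assoc, mul_div_cancel_left₀ _ hκ] using this
  rw [intervalIntegral.integral_eq_sub_of_hasDerivAt (fun x _ => this x)
    ((Real.continuous_cos.comp (continuous_const.mul continuous_id)).intervalIntegrable t s)]
  field_simp

/-- The key identity `∫ H sin(kx) = -k² ∫ Y sin(kx)` for `Y` a second primitive of `H`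
with Dirichlet boundary conditions. -/
lemma coeff_rel (Y G H : ℝ → ℂ)
    (hG : Continuous G) (hH : Measurable H)
    (hHi : IntervalIntegrable H volume 0 Real.pi)
    (hY : ∀ x ∈ Set.Icc (0:ℝ) Real.pi, Y x = ∫ t in (0:ℝ)..x, G t)
    (hGr : ∀ x ∈ Set.Icc (0:ℝ) Real.pi, G x = G 0 + ∫ t in (0:ℝ)..x, H t)
    (hYpi : Y Real.pi = 0) (k : ℤ) (hk : (k:ℝ) ≠ 0) :
    ∫ x in (0:ℝ)..Real.pi, H x * (Real.sin (k * x) : ℂ)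
      = -((k:ℝ)^2 : ℂ) * ∫ x in (0:ℝ)..Real.pi, Y x * (Real.sin (k * x) : ℂ) := by
  have hpi0 : (0:ℝ) ≤ Real.pi := Real.pi_pos.le
  have hsinc : Continuous fun x : ℝ => ((Real.sin ((k:ℝ) * x) : ℂ)) :=
    Complex.continuous_ofReal.comp (Real.continuous_sin.comp (continuous_const.mul continuous_id))
  have hcosc : Continuous fun x : ℝ => ((Real.cos ((k:ℝ) * x) : ℂ)) :=
    Complex.continuous_ofReal.comp (Real.continuous_cos.comp (continuous_const.mul continuous_id))
  have hGi : IntervalIntegrable G volume 0 Real.pi := hG.intervalIntegrable _ _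
  have hkc : ((k:ℝ):ℂ) ≠ 0 := Complex.ofReal_ne_zero.mpr hk
  have hkc' : ((k:ℤ):ℂ) ≠ 0 := by exact_mod_cast hkc
  have hsinpi : Real.sin ((k:ℝ) * Real.pi) = 0 := Real.sin_int_mul_pi k
  have h0 : (∫ x in (0:ℝ)..Real.pi, Y x * (Real.sin ((k:ℝ) * x):ℂ))
      = ∫ x in (0:ℝ)..Real.pi, (∫ t in (0:ℝ)..x, G t) * (Real.sin ((k:ℝ) * x):ℂ) := by
    refine intervalIntegral.integral_congr (fun x hx => ?_)
    rw [Set.uIcc_of_le hpi0] at hx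
    rw [hY x hx]
  have hGtot : (∫ t in (0:ℝ)..Real.pi, G t) = 0 := by
    have h := hY Real.pi (Set.mem_Icc.mpr ⟨hpi0, le_refl _⟩)
    rw [hYpi] at h; exact h.symm
  have key1 : ((k:ℝ):ℂ) * (∫ x in (0:ℝ)..Real.pi, Y x * (Real.sin ((k:ℝ) * x):ℂ))
      = ∫ t in (0:ℝ)..Real.pi, G t * ((Real.cos ((k:ℝ)*t):ℝ):ℂ) := by
    calc ((k:ℝ):ℂ) * (∫ x in (0:ℝ)..Real.pi, Y x * (Real.sin ((k:ℝ) * x):ℂ))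
        = ((k:ℝ):ℂ) * ∫ t in (0:ℝ)..Real.pi, G t * ∫ x in t..Real.pi,
            (Real.sin ((k:ℝ) * x):ℂ) := by
          rw [h0, triangle_swap G _ hG.measurable hGi hsinc]
      _ = ∫ t in (0:ℝ)..Real.pi, ((k:ℝ):ℂ) * (G t * ∫ x in t..Real.pi,
            (Real.sin ((k:ℝ) * x):ℂ)) := by
          rw [intervalIntegral.integral_const_mul]
      _ = ∫ t in (0:ℝ)..Real.pi,
            (G t * ((Real.cos ((k:ℝ)*t):ℝ):ℂ) - ((Real.cos ((k:ℝ)*Real.pi):ℝ):ℂ) * G t) := by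
          refine intervalIntegral.integral_congr (fun t ht => ?_)
          rw [sin_int (k:ℝ) t Real.pi hk]
          push_cast
          field_simp [hkc, hkc']
      _ = (∫ t in (0:ℝ)..Real.pi, G t * ((Real.cos ((k:ℝ)*t):ℝ):ℂ))
            - ((Real.cos ((k:ℝ)*Real.pi):ℝ):ℂ) * ∫ t in (0:ℝ)..Real.pi, G t := by
          rw [intervalIntegral.integral_sub (f := fun t => G t * ((Real.cos ((k:ℝ)*t):ℝ):ℂ))
            (g := fun t => ((Real.cos ((k:ℝ)*Real.pi):ℝ):ℂ) * G t)
            ((hG.mul hcosc).intervalIntegrable _ _)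
            ((continuous_const.mul hG).intervalIntegrable _ _),
            intervalIntegral.integral_const_mul]
      _ = ∫ t in (0:ℝ)..Real.pi, G t * ((Real.cos ((k:ℝ)*t):ℝ):ℂ) := by
          rw [hGtot]; ring
  have hprim : ContinuousOn (fun t => ∫ s in (0:ℝ)..t, H s) (Set.uIcc (0:ℝ) Real.pi) := by
    apply intervalIntegral.continuousOn_primitive_interval
    rw [Set.uIcc_of_le hpi0, integrableOn_Icc_iff_integrableOn_Ioc]
    exact hHi.1
  have key2 : ((k:ℝ):ℂ) * (∫ t in (0:ℝ)..Real.pi, G t * ((Real.cos ((k:ℝ)*t):ℝ):ℂ))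
      = -∫ x in (0:ℝ)..Real.pi, H x * (Real.sin ((k:ℝ) * x):ℂ) := by
    have hsplit : (∫ t in (0:ℝ)..Real.pi, G t * ((Real.cos ((k:ℝ)*t):ℝ):ℂ))
        = ∫ t in (0:ℝ)..Real.pi, (G 0 * ((Real.cos ((k:ℝ)*t):ℝ):ℂ)
            + (∫ s in (0:ℝ)..t, H s) * ((Real.cos ((k:ℝ)*t):ℝ):ℂ)) := by
      refine intervalIntegral.integral_congr (fun t ht => ?_)
      rw [Set.uIcc_of_le hpi0] at ht
      rw [hGr t ht]; ring
    have hcos0 : (∫ t in (0:ℝ)..Real.pi, ((Real.cos ((k:ℝ)*t):ℝ):ℂ)) = 0 := by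
      rw [cos_int (k:ℝ) 0 Real.pi hk]
      simp [hsinpi]
    calc ((k:ℝ):ℂ) * (∫ t in (0:ℝ)..Real.pi, G t * ((Real.cos ((k:ℝ)*t):ℝ):ℂ))
        = ((k:ℝ):ℂ) * ((G 0 * ∫ t in (0:ℝ)..Real.pi, ((Real.cos ((k:ℝ)*t):ℝ):ℂ))
            + ∫ t in (0:ℝ)..Real.pi,
              (∫ s in (0:ℝ)..t, H s) * ((Real.cos ((k:ℝ)*t):ℝ):ℂ)) := by
          rw [hsplit, intervalIntegral.integral_add
            (f := fun t => G 0 * ((Real.cos ((k:ℝ)*t):ℝ):ℂ))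
            (g := fun t => (∫ s in (0:ℝ)..t, H s) * ((Real.cos ((k:ℝ)*t):ℝ):ℂ))
            ((continuous_const.mul hcosc).intervalIntegrable _ _)
            ((hprim.mul hcosc.continuousOn).intervalIntegrable),
            intervalIntegral.integral_const_mul]
      _ = ((k:ℝ):ℂ) * ∫ s in (0:ℝ)..Real.pi, H s * ∫ x in s..Real.pi,
            ((Real.cos ((k:ℝ)*x):ℝ):ℂ) := by
          rw [hcos0, triangle_swap H _ hH hHi hcosc]; ring
      _ = ∫ s in (0:ℝ)..Real.pi, ((k:ℝ):ℂ) * (H s * ∫ x in s..Real.pi,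
            ((Real.cos ((k:ℝ)*x):ℝ):ℂ)) := by
          rw [intervalIntegral.integral_const_mul]
      _ = ∫ s in (0:ℝ)..Real.pi, -(H s * ((Real.sin ((k:ℝ)*s):ℝ):ℂ)) := by
          refine intervalIntegral.integral_congr (fun s hs => ?_)
          rw [cos_int (k:ℝ) s Real.pi hk]
          push_cast [hsinpi]
          field_simp [hkc, hkc']
          ring
      _ = -∫ x in (0:ℝ)..Real.pi, H x * (Real.sin ((k:ℝ) * x):ℂ) := by
          rw [intervalIntegral.integral_neg]
  push_cast at key1 key2 ⊢
  linear_combination ((k:ℤ):ℂ) * key1 + key2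

/-- Parseval's identity for the sine system on `[0, π]`. -/
lemma sine_parseval (F : ℝ → ℂ) (hF : Measurable F) (K : ℝ)
    (hK : ∀ x, ‖F x‖ ≤ K) :
    Summable (fun k : ℤ => ‖∫ x in (0:ℝ)..Real.pi, F x * (Real.sin (k * x) : ℂ)‖^2) ∧
    ∑' k : ℤ, ‖∫ x in (0:ℝ)..Real.pi, F x * (Real.sin (k * x) : ℂ)‖^2
      = Real.pi * ∫ x in (0:ℝ)..Real.pi, ‖F x‖^2 := by
  have hπ : (0:ℝ) < Real.pi := Real.pi_pos
  have hK0 : 0 ≤ K := le_trans (norm_nonneg _) (hK 0)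
  haveI hfact : Fact ((0:ℝ) < 2 * Real.pi) := ⟨by linarith⟩
  set T : ℝ := 2 * Real.pi with hTdef
  have hTpos : (0:ℝ) < T := by rw [hTdef]; linarith
  set G : ℝ → ℂ := fun x => if 0 ≤ x then F x else -F (-x) with hGdef
  have hGmeas : Measurable G :=
    Measurable.ite (measurableSet_le measurable_const measurable_id) hF
      (hF.comp measurable_neg).neg
  have hGK : ∀ x, ‖G x‖ ≤ K := by
    intro x
    by_cases h : 0 ≤ x <;> simp only [hGdef, h, if_true, if_false, norm_neg] <;> apply hK
  set Φ : AddCircle T → ℂ := AddCircle.liftIoc T (-Real.pi) G with hΦdef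
  have hΦeq : Φ = fun z => G ((AddCircle.measurableEquivIoc T (-Real.pi) z : ℝ)) := rfl
  have hΦmeas : Measurable Φ := by
    rw [hΦeq]
    exact hGmeas.comp (measurable_subtype_coe.comp
      (AddCircle.measurableEquivIoc T (-Real.pi)).measurable)
  have hΦK : ∀ z, ‖Φ z‖ ≤ K := by
    intro z; rw [hΦeq]; exact hGK _
  have hmem : MeasureTheory.MemLp Φ 2 (AddCircle.haarAddCircle) :=
    MeasureTheory.MemLp.of_bound hΦmeas.aestronglyMeasurable K (ae_of_all _ hΦK)
  set f := hmem.toLp Φ with hfdef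
  have hcoeff : ∀ kk : ℤ, fourierCoeff (⇑f) kk = fourierCoeff Φ kk := by
    intro kk
    unfold fourierCoeff
    refine integral_congr_ae ?_
    filter_upwards [hmem.coeFn_toLp] with t ht
    rw [ht]
  have hfour : ∀ (kk : ℤ) (x : ℝ), (fourier (-kk) (x : AddCircle T) : ℂ)
      = Complex.exp (((-(kk:ℝ) * x : ℝ) : ℂ) * Complex.I) := by
    intro kk x
    rw [fourier_coe_apply]
    congr 1
    have hπne : (Real.pi:ℂ) ≠ 0 := Complex.ofReal_ne_zero.mpr Real.pi_ne_zero
    field_simp [hTdef, hπne]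
    rw [hTdef]
    push_cast
    ring
  have hbd : ∀ (kk : ℤ) (x : ℝ),
      ‖Complex.exp (((-(kk:ℝ) * x : ℝ) : ℂ) * Complex.I) * G x‖ ≤ K := by
    intro kk x
    rw [norm_mul, Complex.norm_exp_ofReal_mul_I, one_mul]
    exact hGK x
  have hintE : ∀ (kk : ℤ) (a b : ℝ), IntervalIntegrable
      (fun x => Complex.exp (((-(kk:ℝ) * x : ℝ) : ℂ) * Complex.I) * G x) volume a b := by
    intro kk a b
    refine bddIntInt a b (Measurable.aestronglyMeasurable ?_) (hbd kk)
    exact (Complex.measurable_exp.comp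
      ((Complex.measurable_ofReal.comp (measurable_const.mul measurable_id)).mul
        measurable_const)).mul hGmeas
  have hexp : ∀ θ : ℝ, Complex.exp ((θ:ℂ) * Complex.I)
      = (Real.cos θ : ℂ) + (Real.sin θ : ℂ) * Complex.I := by
    intro θ
    rw [Complex.exp_mul_I, Complex.ofReal_cos, Complex.ofReal_sin]
  have hckk : ∀ kk : ℤ, fourierCoeff Φ kk
      = (1/T) • ((-2) * Complex.I * ∫ x in (0:ℝ)..Real.pi, F x * (Real.sin (kk * x) : ℂ)) := by
    intro kk
    have hend : -Real.pi + T = Real.pi := by rw [hTdef]; ring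
    haveI hfact' : Fact ((0:ℝ) < -Real.pi + T - -Real.pi) := ⟨by rw [hTdef]; linarith⟩
    have hfour' : ∀ x : ℝ,
        (fourier (-kk) (x : AddCircle (-Real.pi + T - -Real.pi)) : ℂ)
          = Complex.exp (((-(kk:ℝ) * x : ℝ) : ℂ) * Complex.I) := by
      intro x
      rw [fourier_coe_apply]
      congr 1
      have hπne : (Real.pi:ℂ) ≠ 0 := Complex.ofReal_ne_zero.mpr Real.pi_ne_zero
      field_simp [hTdef, hπne]
      rw [hTdef]
      push_cast
      ring
    rw [hΦdef, fourierCoeff_liftIoc_eq, fourierCoeffOn_eq_integral]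
    have hstep1 : (∫ x in (-Real.pi)..(-Real.pi + T),
          (fourier (-kk) (x : AddCircle (-Real.pi + T - -Real.pi)) : ℂ) • G x)
        = ∫ x in (-Real.pi)..(-Real.pi + T),
            Complex.exp (((-(kk:ℝ) * x : ℝ) : ℂ) * Complex.I) * G x := by
      refine intervalIntegral.integral_congr (fun x _ => ?_)
      rw [smul_eq_mul, hfour']
    rw [hstep1, hend]
    have hsc : (1:ℝ)/(Real.pi - -Real.pi) = 1/T := by rw [hTdef]; ring_nf
    rw [hsc]
    congr 1
    rw [← intervalIntegral.integral_add_adjacent_intervals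
      (hintE kk (-Real.pi) 0) (hintE kk 0 Real.pi)]
    have hneg : (∫ x in (-Real.pi)..(0:ℝ),
          Complex.exp (((-(kk:ℝ) * x : ℝ) : ℂ) * Complex.I) * G x)
        = ∫ u in (0:ℝ)..Real.pi,
            Complex.exp (((-(kk:ℝ) * (-u) : ℝ) : ℂ) * Complex.I) * G (-u) := by
      rw [intervalIntegral.integral_comp_neg
        (fun x => Complex.exp (((-(kk:ℝ) * x : ℝ) : ℂ) * Complex.I) * G x)]
      norm_num
    have hintE' : IntervalIntegrable
        (fun u => Complex.exp (((-(kk:ℝ) * (-u) : ℝ) : ℂ) * Complex.I) * G (-u))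
        volume 0 Real.pi := by
      refine bddIntInt 0 Real.pi (Measurable.aestronglyMeasurable ?_) (K := K) ?_
      · exact (Complex.measurable_exp.comp
          ((Complex.measurable_ofReal.comp ((measurable_const.mul measurable_neg))).mul
            measurable_const)).mul (hGmeas.comp measurable_neg)
      · intro x
        rw [norm_mul, Complex.norm_exp_ofReal_mul_I, one_mul]
        exact hGK _
    rw [hneg, ← intervalIntegral.integral_add hintE' (hintE kk 0 Real.pi),
      ← intervalIntegral.integral_const_mul]
    refine intervalIntegral.integral_congr_ae (MeasureTheory.ae_of_all _ (fun x hx => ?_))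
    rw [Set.uIoc_of_le hπ.le] at hx
    have hx0 : (0:ℝ) < x := hx.1
    have hGx : G x = F x := by rw [hGdef]; simp [hx0.le]
    have hGnx : G (-x) = -F x := by
      rw [hGdef]
      have hh : ¬ (0 ≤ -x) := by linarith
      simp [hh]
    rw [hGx, hGnx]
    have harg1 : -(kk:ℝ) * (-x) = (kk:ℝ) * x := by ring
    have harg2 : -(kk:ℝ) * x = -((kk:ℝ) * x) := by ring
    rw [harg1, harg2, hexp ((kk:ℝ) * x), hexp (-((kk:ℝ) * x)), Real.cos_neg, Real.sin_neg]
    push_cast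
    ring
  have hnorm2 : ∀ kk : ℤ, ‖fourierCoeff Φ kk‖^2
      = (1/Real.pi^2) * ‖∫ x in (0:ℝ)..Real.pi, F x * (Real.sin (kk * x) : ℂ)‖^2 := by
    intro kk
    rw [hckk kk, norm_smul, norm_mul, norm_mul]
    have h1 : ‖(1/T : ℝ)‖ = 1/(2*Real.pi) := by
      rw [hTdef, Real.norm_eq_abs, abs_of_pos (by positivity)]
    have h2 : ‖(-2 : ℂ)‖ = 2 := by norm_num
    have h3 : ‖Complex.I‖ = 1 := Complex.norm_I
    rw [h1, h2, h3]
    field_simp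
  have hsummc : Summable (fun i : ℤ => ‖fourierCoeff (⇑f) i‖^2) := by
    have h := (lp.memℓp (fourierBasis.repr f)).summable (by norm_num)
    have heq : ∀ i : ℤ, ‖fourierBasis.repr f i‖ ^ ((2:ENNReal)).toReal
        = ‖fourierCoeff (⇑f) i‖^2 := by
      intro i
      rw [fourierBasis_repr]
      norm_num
    exact (summable_congr heq).mp h
  have hpars := tsum_sq_fourierCoeff f
  have hfΦ : (∫ t, ‖(⇑f) t‖^2 ∂(AddCircle.haarAddCircle))
      = ∫ t, ‖Φ t‖^2 ∂(AddCircle.haarAddCircle) := by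
    refine integral_congr_ae ?_
    filter_upwards [hmem.coeFn_toLp] with t ht
    rw [ht]
  have hΦvol : (∫ t, ‖Φ t‖^2 ∂(volume : Measure (AddCircle T)))
      = T * ∫ t, ‖Φ t‖^2 ∂(AddCircle.haarAddCircle) := by
    rw [AddCircle.volume_eq_smul_haarAddCircle, MeasureTheory.integral_smul_measure,
      ENNReal.toReal_ofReal hTpos.le, smul_eq_mul]
  have hpre := AddCircle.intervalIntegral_preimage T (-Real.pi) (fun t => ‖Φ t‖^2)
  have hend : -Real.pi + T = Real.pi := by rw [hTdef]; ring
  rw [hend] at hpre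
  have hΦG : (∫ x in (-Real.pi)..Real.pi, ‖Φ (x : AddCircle T)‖^2)
      = ∫ x in (-Real.pi)..Real.pi, ‖G x‖^2 := by
    refine intervalIntegral.integral_congr_ae (MeasureTheory.ae_of_all _ fun x hx => ?_)
    rw [Set.uIoc_of_le (by linarith : -Real.pi ≤ Real.pi)] at hx
    have hx' : x ∈ Set.Ioc (-Real.pi) (-Real.pi + T) := by rw [hend]; exact hx
    rw [hΦdef, AddCircle.liftIoc_coe_apply hx']
  have hGsplit : (∫ x in (-Real.pi)..Real.pi, ‖G x‖^2)
      = 2 * ∫ x in (0:ℝ)..Real.pi, ‖F x‖^2 := by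
    have hGint : ∀ a b : ℝ, IntervalIntegrable (fun x => ‖G x‖^2) volume a b := by
      intro a b
      refine bddIntInt a b ((hGmeas.norm.pow measurable_const).aestronglyMeasurable)
        (K := K^2) ?_
      intro x
      rw [Real.norm_eq_abs, abs_of_nonneg (by positivity)]
      exact pow_le_pow_left₀ (norm_nonneg _) (hGK x) 2
    rw [← intervalIntegral.integral_add_adjacent_intervals (hGint (-Real.pi) 0)
      (hGint 0 Real.pi)]
    have hneg2 : (∫ x in (-Real.pi)..(0:ℝ), ‖G x‖^2)
        = ∫ x in (0:ℝ)..Real.pi, ‖G (-x)‖^2 := by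
      rw [intervalIntegral.integral_comp_neg (fun x => ‖G x‖^2)]
      norm_num
    rw [hneg2]
    have e1 : (∫ x in (0:ℝ)..Real.pi, ‖G (-x)‖^2) = ∫ x in (0:ℝ)..Real.pi, ‖F x‖^2 := by
      refine intervalIntegral.integral_congr_ae (MeasureTheory.ae_of_all _ fun x hx => ?_)
      rw [Set.uIoc_of_le hπ.le] at hx
      have hh : ¬ (0 ≤ -x) := by linarith [hx.1]
      rw [hGdef]
      simp [hh, norm_neg]
    have e2 : (∫ x in (0:ℝ)..Real.pi, ‖G x‖^2) = ∫ x in (0:ℝ)..Real.pi, ‖F x‖^2 := by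
      refine intervalIntegral.integral_congr_ae (MeasureTheory.ae_of_all _ fun x hx => ?_)
      rw [Set.uIoc_of_le hπ.le] at hx
      rw [hGdef]
      simp [hx.1.le]
    rw [e1, e2]
    ring
  have hfinal : (∫ t, ‖Φ t‖^2 ∂(AddCircle.haarAddCircle))
      = (2 * ∫ x in (0:ℝ)..Real.pi, ‖F x‖^2) / T := by
    rw [eq_div_iff (ne_of_gt hTpos), mul_comm, ← hΦvol, ← hpre, hΦG, hGsplit]
  constructor
  · have heq : (fun kk : ℤ => ‖∫ x in (0:ℝ)..Real.pi, F x * (Real.sin (kk * x) : ℂ)‖^2)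
        = fun kk => Real.pi^2 * ‖fourierCoeff (⇑f) kk‖^2 := by
      funext kk
      rw [hcoeff kk, hnorm2 kk]
      field_simp
    rw [heq]
    exact hsummc.mul_left _
  · have hsum : (∑' kk : ℤ, ‖∫ x in (0:ℝ)..Real.pi, F x * (Real.sin (kk * x) : ℂ)‖^2)
        = Real.pi^2 * ∑' kk : ℤ, ‖fourierCoeff (⇑f) kk‖^2 := by
      rw [← tsum_mul_left]
      congr 1
      funext kk
      rw [hcoeff kk, hnorm2 kk]
      field_simp
    rw [hsum, hpars, hfΦ, hfinal, hTdef]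
    field_simp

lemma sin_neg_int (F : ℝ → ℂ) (k : ℤ) :
    (∫ x in (0:ℝ)..Real.pi, F x * (Real.sin (((-k : ℤ)) * x) : ℂ))
      = -∫ x in (0:ℝ)..Real.pi, F x * (Real.sin (k * x) : ℂ) := by
  rw [← intervalIntegral.integral_neg]
  refine intervalIntegral.integral_congr fun x _ => ?_
  have h : (((-k : ℤ)) : ℝ) * x = -((k:ℝ) * x) := by push_cast; ring
  rw [h, Real.sin_neg]
  push_cast
  ring

/-- Spectral gap arithmetic over the integers. -/
lemma gap_lemma (n k : ℤ) (hn : 1 ≤ n) (hk0 : k ≠ 0) (hkn : k ≠ n) (hkn' : k ≠ -n) :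
    (if n = 1 then (3:ℤ) else 2*n - 1) ≤ |k^2 - n^2| := by
  have hk1 : 1 ≤ |k| := Int.one_le_abs hk0
  have hkn2 : |k| ≠ n := by
    rcases abs_choice k with h | h <;> omega
  have hsq : k^2 = |k|^2 := (sq_abs k).symm
  rcases lt_or_gt_of_ne hkn2 with h | h
  · have h2 : k^2 ≤ (n-1)^2 := by nlinarith [abs_nonneg k]
    have : n^2 - k^2 ≥ 2*n - 1 := by nlinarith
    rw [abs_sub_comm, abs_of_nonneg (by linarith)]
    split_ifs with hn1
    · subst hn1; omega
    · linarith
  · have h2 : (n+1)^2 ≤ k^2 := by nlinarith [abs_nonneg k]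
    have h3 : k^2 - n^2 ≥ 2*n + 1 := by nlinarith
    rw [abs_of_nonneg (by linarith)]
    split_ifs with hn1
    · omega
    · linarith

end Aux

/-- For the Kronig–Penney potential, `n ≥ 1` satisfying Condition 1,
a Dirichlet eigenvalue `λ_n` with `|λ_n − n²| ≤ M` and a corresponding normalized
eigenfunction `Ψ_n`, one has `∫₀^π Ψ_n(x) sin(nx) dx ≠ 0`. -/
theorem stmt12
    (a b c : ℝ) (q : ℝ → ℝ)
    (hc : c ∈ Set.Ioo (0:ℝ) Real.pi) (ha : a < 0) (hb : 0 < b)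
    (habc : (b - a) * c = b * Real.pi)
    (hqa : ∀ x ∈ Set.Icc (0:ℝ) c, q x = a)
    (hqb : ∀ x ∈ Set.Ioc c Real.pi, q x = b)
    (n : ℕ) (hn : 1 ≤ n) (hcond : Cond1 (max |a| b) n)
    (lam : ℂ) (Psi : ℝ → ℂ)
    (hev : IsDirichletEigenpair (fun x => (q x : ℂ)) lam Psi)
    (hbd : ‖lam - ((n : ℂ))^2‖ ≤ max |a| b)
    (hnorm : (∫ x in (0:ℝ)..Real.pi, ‖Psi x‖^2) = 1) :
    (∫ x in (0:ℝ)..Real.pi, Psi x * (Real.sin ((n : ℝ) * x) : ℂ)) ≠ 0 := by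
  intro hcon
  have hπ : (0:ℝ) < Real.pi := Real.pi_pos
  set M := max |a| b with hMdef
  have hMb : b ≤ M := le_max_right _ _
  have hMpos : 0 < M := lt_of_lt_of_le hb hMb
  obtain ⟨g, hnz, hgi, hhi, hyrep, hgrep, hy0, hyπ⟩ := hev
  -- clamp function
  set cl : ℝ → ℝ := fun x => min (max x 0) Real.pi with hcl
  have hclcont : Continuous cl := (continuous_id.max continuous_const).min continuous_const
  have hclmem : ∀ x, cl x ∈ Set.Icc (0:ℝ) Real.pi := fun x =>
    ⟨le_min (le_max_right _ _) hπ.le, min_le_right _ _⟩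
  have hclid : ∀ x ∈ Set.Icc (0:ℝ) Real.pi, cl x = x := by
    intro x hx
    rw [hcl]
    simp only [max_eq_left hx.1, min_eq_left hx.2]
  set Ψt : ℝ → ℂ := fun x => Psi (cl x) with hΨt
  have hPsiCont : ContinuousOn Psi (Set.Icc 0 Real.pi) := by
    have hprim : ContinuousOn (fun x => ∫ t in (0:ℝ)..x, g t) (Set.Icc 0 Real.pi) := by
      have h := intervalIntegral.continuousOn_primitive_interval (a := (0:ℝ))
        (b := Real.pi) (μ := volume) (f := g) ?_
      · rwa [Set.uIcc_of_le hπ.le] at h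
      · rw [Set.uIcc_of_le hπ.le, integrableOn_Icc_iff_integrableOn_Ioc]
        exact hgi.1
    exact (continuousOn_const.add hprim).congr fun x hx => hyrep x hx
  have hΨtcont : Continuous Ψt := hPsiCont.comp_continuous hclcont hclmem
  have hΨteq : ∀ x ∈ Set.Icc (0:ℝ) Real.pi, Ψt x = Psi x := by
    intro x hx
    rw [hΨt]
    simp only [hclid x hx]
  obtain ⟨KP, hKPmem⟩ := (isCompact_Icc.image_of_continuousOn hPsiCont).isBounded.exists_norm_le
  have hKP : ∀ x, ‖Ψt x‖ ≤ KP := fun x => hKPmem _ ⟨cl x, hclmem x, rfl⟩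
  -- the measurable potential
  set qt : ℝ → ℝ := fun x => if x ≤ c then a else b with hqt
  have hqtM : ∀ x, |qt x| ≤ M := by
    intro x
    simp only [hqt]
    split_ifs
    · exact le_max_left _ _
    · rw [abs_of_pos hb]; exact hMb
  have hqteq : ∀ x ∈ Set.Icc (0:ℝ) Real.pi, qt x = q x := by
    intro x hx
    simp only [hqt]
    split_ifs with h
    · exact (hqa x ⟨hx.1, h⟩).symm
    · exact (hqb x ⟨lt_of_not_ge h, hx.2⟩).symm
  have hqtmeas : Measurable qt :=
    Measurable.ite (measurableSet_le measurable_id measurable_const)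
      measurable_const measurable_const
  set H : ℝ → ℂ := fun x => (((qt x : ℝ) : ℂ) - lam) * Ψt x with hHdef
  have hHmeas : Measurable H :=
    ((Complex.measurable_ofReal.comp hqtmeas).sub measurable_const).mul hΨtcont.measurable
  have hKP0 : 0 ≤ KP := le_trans (norm_nonneg _) (hKP 0)
  have hHbd : ∀ x, ‖H x‖ ≤ (M + ‖lam‖) * KP := by
    intro x
    rw [hHdef]
    simp only []
    rw [norm_mul]
    refine mul_le_mul ?_ (hKP x) (norm_nonneg _) (by positivity)
    refine le_trans (norm_sub_le _ _) ?_
    rw [Complex.norm_real, Real.norm_eq_abs]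
    exact add_le_add_left (hqtM x) _
  have hHi : IntervalIntegrable H volume 0 Real.pi :=
    bddIntInt 0 Real.pi hHmeas.aestronglyMeasurable hHbd
  have hHeq : ∀ x ∈ Set.Icc (0:ℝ) Real.pi, H x = ((q x : ℂ) - lam) * Psi x := by
    intro x hx
    rw [hHdef]
    simp only [hqteq x hx, hΨteq x hx]
  set G : ℝ → ℂ := fun x => g 0 + ∫ t in (0:ℝ)..x, H t with hGdef
  have hGcont : Continuous G := by
    refine continuous_const.add (intervalIntegral.continuous_primitive (fun r s => ?_) 0)
    exact bddIntInt r s hHmeas.aestronglyMeasurable hHbd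
  have hGg : ∀ x ∈ Set.Icc (0:ℝ) Real.pi, G x = g x := by
    intro x hx
    rw [hGdef, hgrep x hx]
    simp only [add_right_inj]
    refine intervalIntegral.integral_congr fun t ht => ?_
    rw [Set.uIcc_of_le hx.1] at ht
    exact hHeq t ⟨ht.1, le_trans ht.2 hx.2⟩
  have hYrep : ∀ x ∈ Set.Icc (0:ℝ) Real.pi, Ψt x = ∫ t in (0:ℝ)..x, G t := by
    intro x hx
    rw [hΨteq x hx, hyrep x hx, hy0, zero_add]
    refine (intervalIntegral.integral_congr fun t ht => ?_)
    rw [Set.uIcc_of_le hx.1] at ht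
    exact (hGg t ⟨ht.1, le_trans ht.2 hx.2⟩).symm
  have hGrep : ∀ x ∈ Set.Icc (0:ℝ) Real.pi, G x = G 0 + ∫ t in (0:ℝ)..x, H t := by
    intro x _
    rw [hGdef]
    simp [intervalIntegral.integral_same]
  have hYπ : Ψt Real.pi = 0 := by
    rw [hΨteq Real.pi ⟨hπ.le, le_refl _⟩]
    exact hyπ
  set u : ℤ → ℂ := fun k => ∫ x in (0:ℝ)..Real.pi, Ψt x * (Real.sin (k * x) : ℂ) with hu
  set w : ℤ → ℂ := fun k =>
    ∫ x in (0:ℝ)..Real.pi, ((qt x : ℝ):ℂ) * Ψt x * (Real.sin (k * x) : ℂ) with hw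
  have hsinb : ∀ (k : ℤ) (x : ℝ), ‖((Real.sin (k * x) : ℝ) : ℂ)‖ ≤ 1 := by
    intro k x
    rw [Complex.norm_real, Real.norm_eq_abs]
    exact abs_le.mpr ⟨Real.neg_one_le_sin _, Real.sin_le_one _⟩
  have hsinmeas : ∀ k : ℤ, Measurable fun x : ℝ => ((Real.sin (k * x) : ℝ) : ℂ) := by
    intro k
    exact Complex.measurable_ofReal.comp
      ((Real.continuous_sin.comp (continuous_const.mul continuous_id)).measurable)
  have hwint : ∀ k : ℤ, IntervalIntegrable
      (fun x => ((qt x : ℝ):ℂ) * Ψt x * (Real.sin (k * x) : ℂ)) volume 0 Real.pi := by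
    intro k
    refine bddIntInt 0 Real.pi
      (((Complex.measurable_ofReal.comp hqtmeas).mul hΨtcont.measurable).mul
        (hsinmeas k)).aestronglyMeasurable (K := M * KP * 1) ?_
    intro x
    rw [norm_mul, norm_mul]
    refine mul_le_mul (mul_le_mul ?_ (hKP x) (norm_nonneg _) hMpos.le) (hsinb k x)
      (norm_nonneg _) (by positivity)
    rw [Complex.norm_real, Real.norm_eq_abs]
    exact hqtM x
  have huint : ∀ k : ℤ, IntervalIntegrable
      (fun x => Ψt x * (Real.sin (k * x) : ℂ)) volume 0 Real.pi := by
    intro k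
    refine bddIntInt 0 Real.pi
      (hΨtcont.measurable.mul (hsinmeas k)).aestronglyMeasurable (K := KP * 1) ?_
    intro x
    rw [norm_mul]
    exact mul_le_mul (hKP x) (hsinb k x) (norm_nonneg _) hKP0
  have hrel : ∀ k : ℤ, k ≠ 0 → w k = (lam - (((k:ℝ)^2 : ℝ) : ℂ)) * u k := by
    intro k hk
    have hkR : ((k:ℝ)) ≠ 0 := Int.cast_ne_zero.mpr hk
    have h1 := coeff_rel Ψt G H hGcont hHmeas hHi hYrep hGrep hYπ k hkR
    have hsplit : (∫ x in (0:ℝ)..Real.pi, H x * (Real.sin (k * x) : ℂ))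
        = w k - lam * u k := by
      have hpw : ∀ x : ℝ, H x * (Real.sin (k * x) : ℂ)
          = ((qt x : ℝ):ℂ) * Ψt x * (Real.sin (k * x) : ℂ)
            - lam * (Ψt x * (Real.sin (k * x) : ℂ)) := by
        intro x
        simp only [hHdef]
        ring
      rw [intervalIntegral.integral_congr (fun x _ => hpw x),
        intervalIntegral.integral_sub (hwint k) ((huint k).const_mul lam),
        intervalIntegral.integral_const_mul]
    have e2 : (∫ x in (0:ℝ)..Real.pi, Ψt x * (Real.sin ((k:ℝ) * x) : ℂ)) = u k := rfl
    rw [hsplit, e2] at h1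
    push_cast at h1 ⊢
    linear_combination h1
  -- Parseval for Ψt
  obtain ⟨hsummu, hparsu⟩ := sine_parseval Ψt hΨtcont.measurable KP hKP
  have hnorm' : (∫ x in (0:ℝ)..Real.pi, ‖Ψt x‖^2) = 1 := by
    rw [← hnorm]
    refine intervalIntegral.integral_congr fun x hx => ?_
    rw [Set.uIcc_of_le hπ.le] at hx
    rw [hΨteq x hx]
  rw [hnorm', mul_one] at hparsu
  -- Parseval for qt * Ψt
  obtain ⟨hsummw, hparsw⟩ := sine_parseval (fun x => ((qt x : ℝ):ℂ) * Ψt x)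
    ((Complex.measurable_ofReal.comp hqtmeas).mul hΨtcont.measurable) (M * KP)
    (fun x => by
      rw [norm_mul]
      refine mul_le_mul ?_ (hKP x) (norm_nonneg _) hMpos.le
      rw [Complex.norm_real, Real.norm_eq_abs]
      exact hqtM x)
  have hwbound : (∫ x in (0:ℝ)..Real.pi, ‖((qt x : ℝ):ℂ) * Ψt x‖^2) ≤ M^2 := by
    have hmono : (∫ x in (0:ℝ)..Real.pi, ‖((qt x : ℝ):ℂ) * Ψt x‖^2)
        ≤ ∫ x in (0:ℝ)..Real.pi, M^2 * ‖Ψt x‖^2 := by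
      refine intervalIntegral.integral_mono_on hπ.le ?_ ?_ ?_
      · refine bddIntInt 0 Real.pi (Measurable.aestronglyMeasurable ?_) (K := (M*KP)^2) ?_
        · exact (((Complex.measurable_ofReal.comp hqtmeas).mul
            hΨtcont.measurable).norm.pow measurable_const)
        · intro x
          rw [Real.norm_eq_abs, abs_of_nonneg (by positivity)]
          refine pow_le_pow_left₀ (norm_nonneg _) ?_ 2
          rw [norm_mul]
          refine mul_le_mul ?_ (hKP x) (norm_nonneg _) hMpos.le
          rw [Complex.norm_real, Real.norm_eq_abs]
          exact hqtM x
      · exact (continuous_const.mul ((hΨtcont.norm).pow 2)).intervalIntegrable _ _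
      · intro x _
        rw [norm_mul, mul_pow]
        refine mul_le_mul_of_nonneg_right ?_ (by positivity)
        rw [Complex.norm_real, Real.norm_eq_abs]
        exact pow_le_pow_left₀ (abs_nonneg _) (hqtM x) 2
    calc (∫ x in (0:ℝ)..Real.pi, ‖((qt x : ℝ):ℂ) * Ψt x‖^2)
        ≤ ∫ x in (0:ℝ)..Real.pi, M^2 * ‖Ψt x‖^2 := hmono
      _ = M^2 * ∫ x in (0:ℝ)..Real.pi, ‖Ψt x‖^2 := intervalIntegral.integral_const_mul _ _
      _ = M^2 := by rw [hnorm', mul_one]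
  -- the vanishing coefficients
  have hun : u (n : ℤ) = 0 := by
    rw [hu, ← hcon]
    refine intervalIntegral.integral_congr fun x hx => ?_
    rw [Set.uIcc_of_le hπ.le] at hx
    rw [hΨteq x hx]
    norm_num
  have hunneg : u (-(n : ℤ)) = 0 := by
    have h := sin_neg_int Ψt (n:ℤ)
    have e1 : u (-(n:ℤ)) = ∫ x in (0:ℝ)..Real.pi,
        Ψt x * (Real.sin (((-(n:ℤ) : ℤ)) * x) : ℂ) := rfl
    have e2 : u ((n:ℤ)) = ∫ x in (0:ℝ)..Real.pi,
        Ψt x * (Real.sin (((n:ℤ)) * x) : ℂ) := rfl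
    rw [e1, h, ← e2, hun, neg_zero]
  -- gap quantity
  set γ : ℝ := if n = 1 then 3 else 2*(n:ℝ) - 1 with hγdef
  have hγM : M < γ - M := by
    rcases eq_or_lt_of_le hn with h1 | h1
    · have hM12 : M ≤ 1/2 := hcond.1 h1.symm
      rw [hγdef, if_pos h1.symm]
      linarith
    · have hMn : M < (2*(n:ℝ) - 1)/2 := hcond.2 h1
      rw [hγdef, if_neg (by omega)]
      linarith
  have hδpos : (0:ℝ) < γ - M := lt_trans hMpos hγM
  have hkey : ∀ k : ℤ, ‖u k‖^2 ≤ ‖w k‖^2 / (γ - M)^2 := by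
    intro k
    by_cases hk0 : k = 0
    · subst hk0
      have : u 0 = 0 := by
        rw [hu]
        simp
      rw [this, norm_zero]
      have h0 : ((0:ℝ))^2 = 0 := by norm_num
      rw [h0]
      positivity
    by_cases hkn : k = (n:ℤ)
    · subst hkn
      rw [hun, norm_zero]
      have h0 : ((0:ℝ))^2 = 0 := by norm_num
      rw [h0]
      positivity
    by_cases hkn' : k = -(n:ℤ)
    · subst hkn'
      rw [hunneg, norm_zero]
      have h0 : ((0:ℝ))^2 = 0 := by norm_num
      rw [h0]
      positivity
    have hgap := gap_lemma (n:ℤ) k (by exact_mod_cast hn) hk0 hkn hkn'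
    have hγle : γ ≤ |(k:ℝ)^2 - (n:ℝ)^2| := by
      have hcast : |(k:ℝ)^2 - (n:ℝ)^2| = ((|k^2 - (n:ℤ)^2| : ℤ) : ℝ) := by
        push_cast
        rw [abs_sub_comm]
      rw [hcast, hγdef]
      by_cases h1 : n = 1
      · rw [if_pos h1]
        have : ((n:ℤ)) = 1 := by omega
        rw [if_pos this] at hgap
        exact_mod_cast hgap
      · rw [if_neg h1]
        have : ¬ ((n:ℤ) = 1) := by omega
        rw [if_neg this] at hgap
        push_cast
        exact_mod_cast hgap
    have h2 : γ - M ≤ ‖lam - (((k:ℝ)^2 : ℝ) : ℂ)‖ := by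
      have htri : ‖(((k:ℝ)^2 : ℝ) : ℂ) - ((n:ℂ))^2‖
          ≤ ‖lam - (((k:ℝ)^2 : ℝ) : ℂ)‖ + ‖lam - ((n:ℂ))^2‖ := by
        have : (((k:ℝ)^2 : ℝ) : ℂ) - ((n:ℂ))^2
            = (lam - ((n:ℂ))^2) - (lam - (((k:ℝ)^2 : ℝ) : ℂ)) := by ring
        rw [this]
        refine le_trans (norm_sub_le _ _) ?_
        linarith
      have hnormkk : ‖(((k:ℝ)^2 : ℝ) : ℂ) - ((n:ℂ))^2‖ = |(k:ℝ)^2 - (n:ℝ)^2| := by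
        have : (((k:ℝ)^2 : ℝ) : ℂ) - ((n:ℂ))^2 = (((k:ℝ)^2 - (n:ℝ)^2 : ℝ) : ℂ) := by
          push_cast
          ring
        rw [this, Complex.norm_real, Real.norm_eq_abs]
      rw [hnormkk] at htri
      linarith [hbd, hγle]
    have h3 := hrel k hk0
    have h4 : (γ - M) * ‖u k‖ ≤ ‖w k‖ := by
      rw [h3, norm_mul]
      exact mul_le_mul_of_nonneg_right h2 (norm_nonneg _)
    rw [le_div_iff₀ (by positivity)]
    have h5 := mul_le_mul h4 h4 (mul_nonneg hδpos.le (norm_nonneg _)) (norm_nonneg _)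
    nlinarith [h5]
  have hsum1 : Real.pi ≤ (Real.pi * ∫ x in (0:ℝ)..Real.pi, ‖((qt x : ℝ):ℂ) * Ψt x‖^2)
      / (γ - M)^2 := by
    calc Real.pi = ∑' k : ℤ, ‖u k‖^2 := hparsu.symm
      _ ≤ ∑' k : ℤ, ‖w k‖^2 / (γ - M)^2 :=
          Summable.tsum_le_tsum hkey hsummu (hsummw.div_const _)
      _ = (∑' k : ℤ, ‖w k‖^2) / (γ - M)^2 := by rw [tsum_div_const]
      _ = (Real.pi * ∫ x in (0:ℝ)..Real.pi, ‖((qt x : ℝ):ℂ) * Ψt x‖^2) / (γ - M)^2 := by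
          rw [hparsw]
  rw [le_div_iff₀ (by positivity)] at hsum1
  have hXM : Real.pi * (∫ x in (0:ℝ)..Real.pi, ‖((qt x : ℝ):ℂ) * Ψt x‖^2)
      ≤ Real.pi * M^2 := mul_le_mul_of_nonneg_left hwbound hπ.le
  have hsq : M^2 < (γ - M)^2 := by nlinarith [hγM, hMpos]
  have h5 : Real.pi * M^2 < Real.pi * (γ - M)^2 := mul_lt_mul_of_pos_left hsq hπ
  linarith
end

section
/- If q belongs to the class E, then the sum Σ_{k,l ∈ ℤ, k ≠ 0, l ≠ 0, k+l ≠ 0} C_k C_l C_{−k−l} / ( k(k+l) ) converges absolutely and equals 0. -/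
open MeasureTheory Filter Asymptotics

lemma cosCoef_bound (q : ℝ → ℂ) (hint : IntervalIntegrable q volume 0 Real.pi) (k : ℤ) :
    ‖cosCoef q k‖ ≤ (1 / Real.pi) * ∫ x in (0:ℝ)..Real.pi, ‖q x‖ := by
  have hπ : (0:ℝ) ≤ Real.pi := Real.pi_pos.le
  have h1 : IntervalIntegrable (fun x => q x * (Real.cos ((k:ℝ)*x) : ℂ)) volume 0 Real.pi :=
    hint.mul_continuousOn (Continuous.continuousOn (by continuity))
  rw [cosCoef, norm_mul]
  have hn : ‖(1 / (Real.pi:ℂ))‖ = 1 / Real.pi := by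
    rw [norm_div, Complex.norm_real]
    simp [abs_of_pos Real.pi_pos]
  rw [hn]
  have h2 : ‖∫ x in (0:ℝ)..Real.pi, q x * (Real.cos ((k:ℝ)*x) : ℂ)‖
      ≤ ∫ x in (0:ℝ)..Real.pi, ‖q x‖ := by
    refine le_trans (intervalIntegral.norm_integral_le_integral_norm hπ) ?_
    refine intervalIntegral.integral_mono_on hπ h1.norm hint.norm ?_
    intro x _
    rw [norm_mul, Complex.norm_real]
    exact mul_le_of_le_one_right (norm_nonneg _) (by simpa using Real.abs_cos_le_one _)
  have hπ' : (0:ℝ) ≤ 1 / Real.pi := by positivity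
  exact mul_le_mul_of_nonneg_left h2 hπ'

/-- The pointwise three-term identity. -/
lemma key_identity (C : ℤ → ℂ) (k l : ℤ) :
    (if k ≠ 0 ∧ l ≠ 0 ∧ k + l ≠ 0 then
        C k * C l * C (-(k + l)) / ((k:ℂ) * ((k:ℂ) + (l:ℂ))) else 0)
    + (if l ≠ 0 ∧ k ≠ 0 ∧ l + k ≠ 0 then
        C l * C k * C (-(l + k)) / ((l:ℂ) * ((l:ℂ) + (k:ℂ))) else 0)
    + (if l ≠ 0 ∧ -(k + l) ≠ 0 ∧ l + -(k + l) ≠ 0 then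
        C l * C (-(k + l)) * C (-(l + -(k + l))) /
          ((l:ℂ) * ((l:ℂ) + ((-(k + l) : ℤ):ℂ))) else 0) = 0 := by
  by_cases hk : k = 0
  · rw [if_neg (by omega), if_neg (by omega), if_neg (by omega)]; ring
  by_cases hl : l = 0
  · rw [if_neg (by omega), if_neg (by omega), if_neg (by omega)]; ring
  by_cases hkl : k + l = 0
  · rw [if_neg (by omega), if_neg (by omega), if_neg (by omega)]; ring
  rw [if_pos ⟨hk, hl, hkl⟩, if_pos ⟨hl, hk, by omega⟩, if_pos ⟨hl, by omega, by omega⟩]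
  have e1 : -(l + k) = -(k + l) := by ring
  have e2 : -(l + -(k + l)) = k := by ring
  rw [e1, e2]
  have hK : (k:ℂ) ≠ 0 := Int.cast_ne_zero.2 hk
  have hL : (l:ℂ) ≠ 0 := Int.cast_ne_zero.2 hl
  have hKL : (k:ℂ) + (l:ℂ) ≠ 0 := by
    have : ((k + l : ℤ) : ℂ) ≠ 0 := Int.cast_ne_zero.2 hkl
    push_cast at this; exact this
  have e3 : ((-(k + l) : ℤ):ℂ) = -((k:ℂ) + (l:ℂ)) := by push_cast; ring
  rw [e3]
  have e4 : (l:ℂ) + -((k:ℂ) + (l:ℂ)) = -(k:ℂ) := by ring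
  have e5 : (l:ℂ) + (k:ℂ) = (k:ℂ) + (l:ℂ) := add_comm _ _
  rw [e4, e5]
  field_simp
  ring

/-- A uniform bound `‖C_k‖ ≤ M / |k|` from the `O(1/n)` hypothesis. -/
lemma exists_coef_bound (q : ℝ → ℂ)
    (hint : IntervalIntegrable q volume 0 Real.pi)
    (hE : (fun n : ℕ => cosCoef q (n : ℤ)) =O[atTop] fun n : ℕ => (1 : ℝ) / n) :
    ∃ M : ℝ, 0 ≤ M ∧ ∀ k : ℤ, k ≠ 0 → ‖cosCoef q k‖ ≤ M / |(k:ℝ)| := by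
  obtain ⟨A, hA⟩ := hE.bound
  rw [eventually_atTop] at hA
  obtain ⟨N, hN⟩ := hA
  set B : ℝ := (1 / Real.pi) * ∫ x in (0:ℝ)..Real.pi, ‖q x‖ with hBdef
  have hB : ∀ k : ℤ, ‖cosCoef q k‖ ≤ B := cosCoef_bound q hint
  have hB0 : 0 ≤ B := le_trans (norm_nonneg _) (hB 0)
  refine ⟨max (max A 0) (B * (N + 1)), le_trans (le_max_right A 0) (le_max_left _ _), ?_⟩
  intro k hk
  set M : ℝ := max (max A 0) (B * (N + 1)) with hMdef
  have hM0 : 0 ≤ M := le_trans (le_max_right A 0) (le_max_left _ _)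
  set n : ℕ := k.natAbs with hndef
  have hn1 : 1 ≤ n := by omega
  have hnpos : (0:ℝ) < n := by exact_mod_cast hn1
  have habs : |(k:ℝ)| = (n:ℝ) := by
    rw [← Int.cast_abs]
    norm_cast
    rw [hndef, Int.abs_eq_natAbs]
  have hkn : ‖cosCoef q k‖ = ‖cosCoef q (n:ℤ)‖ := by
    rcases Int.natAbs_eq k with h | h
    · rw [← hndef] at h; rw [← h]
    · rw [← hndef] at h; rw [h, cosCoef_neg]
  rw [hkn, habs]
  rcases le_or_gt N n with hcase | hcase
  · have := hN n hcase
    have h1n : ‖(1:ℝ) / n‖ = 1 / n := by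
      rw [Real.norm_eq_abs, abs_of_nonneg (by positivity)]
    rw [h1n] at this
    calc ‖cosCoef q (n:ℤ)‖ ≤ A * (1 / n) := this
      _ ≤ M * (1 / n) := by
          apply mul_le_mul_of_nonneg_right _ (by positivity)
          exact le_trans (le_max_left _ _) (le_max_left _ _)
      _ = M / n := by ring
  · calc ‖cosCoef q (n:ℤ)‖ ≤ B := hB _
      _ ≤ M / n := by
          rw [le_div_iff₀ hnpos]
          calc B * n ≤ B * (N + 1) := by
                apply mul_le_mul_of_nonneg_left _ hB0
                exact_mod_cast Nat.le_succ_of_le hcase.le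
            _ ≤ M := le_max_right _ _

set_option maxHeartbeats 1000000 in
/-- If `q` belongs to the class `E` (i.e. `C_n = O(1/n)` and `C₀ = 0`),
then `Σ_{k,l ≠ 0, k+l ≠ 0} C_k C_l C_{−k−l} / (k(k+l))` converges absolutely and equals 0. -/
theorem stmt13 (q : ℝ → ℂ)
    (hint : IntervalIntegrable q volume 0 Real.pi)
    (hC0 : cosCoef q 0 = 0)
    (hE : (fun n : ℕ => cosCoef q (n : ℤ)) =O[atTop] fun n : ℕ => (1 : ℝ) / n) :
    Summable (fun kl : ℤ × ℤ =>
      if kl.1 ≠ 0 ∧ kl.2 ≠ 0 ∧ kl.1 + kl.2 ≠ 0 then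
        cosCoef q kl.1 * cosCoef q kl.2 * cosCoef q (-(kl.1 + kl.2)) /
          ((kl.1 : ℂ) * ((kl.1 : ℂ) + (kl.2 : ℂ)))
      else 0) ∧
    (∑' kl : ℤ × ℤ,
      if kl.1 ≠ 0 ∧ kl.2 ≠ 0 ∧ kl.1 + kl.2 ≠ 0 then
        cosCoef q kl.1 * cosCoef q kl.2 * cosCoef q (-(kl.1 + kl.2)) /
          ((kl.1 : ℂ) * ((kl.1 : ℂ) + (kl.2 : ℂ)))
      else 0) = 0 := by
  set F : ℤ × ℤ → ℂ := fun kl =>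
    if kl.1 ≠ 0 ∧ kl.2 ≠ 0 ∧ kl.1 + kl.2 ≠ 0 then
      cosCoef q kl.1 * cosCoef q kl.2 * cosCoef q (-(kl.1 + kl.2)) /
        ((kl.1 : ℂ) * ((kl.1 : ℂ) + (kl.2 : ℂ)))
    else 0 with hFdef
  -- the majorant
  obtain ⟨M, hM0, hM⟩ := exists_coef_bound q hint hE
  set B : ℝ := (1 / Real.pi) * ∫ x in (0:ℝ)..Real.pi, ‖q x‖ with hBdef
  have hB : ∀ k : ℤ, ‖cosCoef q k‖ ≤ B := cosCoef_bound q hint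
  have hB0 : 0 ≤ B := le_trans (norm_nonneg _) (hB 0)
  set D : ℝ := M * B * M with hDdef
  have hD0 : 0 ≤ D := by positivity
  set a : ℤ → ℝ := fun k => 1 / (k:ℝ)^2 with hadef
  have ha0 : ∀ k, 0 ≤ a k := fun k => by positivity
  have hasum : Summable a := Real.summable_one_div_int_pow.2 one_lt_two
  have hprod : Summable (fun p : ℤ × ℤ => a p.1 * a p.2) :=
    hasum.mul_of_nonneg hasum ha0 ha0
  set e1 : ℤ × ℤ ≃ ℤ × ℤ :=
    ⟨fun p => (p.1, p.1 + p.2), fun p => (p.1, p.2 - p.1),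
      fun p => by simp, fun p => by simp⟩ with he1
  have hGsum : Summable (fun p : ℤ × ℤ => a p.1 * a (p.1 + p.2)) := by
    have := e1.summable_iff.2 hprod
    exact this
  have hGsum' : Summable (fun p : ℤ × ℤ => D * (a p.1 * a (p.1 + p.2))) := hGsum.mul_left D
  -- the norm bound
  have hbound : ∀ p : ℤ × ℤ, ‖F p‖ ≤ D * (a p.1 * a (p.1 + p.2)) := by
    rintro ⟨k, l⟩
    by_cases h : k ≠ 0 ∧ l ≠ 0 ∧ k + l ≠ 0
    · obtain ⟨hk, hl, hkl⟩ := h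
      rw [hFdef]
      simp only [if_pos (show k ≠ 0 ∧ l ≠ 0 ∧ k + l ≠ 0 from ⟨hk, hl, hkl⟩)]
      have hkR : (0:ℝ) < |(k:ℝ)| := by
        rw [abs_pos]; exact_mod_cast hk
      have hklR : (0:ℝ) < |((k:ℝ) + (l:ℝ))| := by
        rw [abs_pos]
        have : ((k + l : ℤ):ℝ) ≠ 0 := Int.cast_ne_zero.2 hkl
        push_cast at this; exact this
      have hcast : ∀ n : ℤ, ‖(n:ℂ)‖ = |(n:ℝ)| := fun n => by simp
      have hden : ‖(k:ℂ) * ((k:ℂ) + (l:ℂ))‖ = |(k:ℝ)| * |((k:ℝ) + (l:ℝ))| := by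
        rw [norm_mul]
        congr 1
        · exact hcast k
        · rw [show ((k:ℂ) + (l:ℂ)) = ((k+l:ℤ):ℂ) by push_cast; ring, hcast]
          push_cast
          ring
      have hnum : ‖cosCoef q k * cosCoef q l * cosCoef q (-(k + l))‖
          ≤ (M / |(k:ℝ)|) * B * (M / |((k:ℝ) + (l:ℝ))|) := by
        rw [norm_mul, norm_mul]
        have b1 : ‖cosCoef q k‖ ≤ M / |(k:ℝ)| := hM k hk
        have b2 : ‖cosCoef q l‖ ≤ B := hB l
        have b3 : ‖cosCoef q (-(k + l))‖ ≤ M / |((k:ℝ) + (l:ℝ))| := by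
          have := hM (-(k+l)) (by omega)
          have habs : |((-(k+l) : ℤ):ℝ)| = |((k:ℝ) + (l:ℝ))| := by
            push_cast; rw [abs_neg]
          rwa [habs] at this
        exact mul_le_mul (mul_le_mul b1 b2 (norm_nonneg _) (by positivity)) b3
          (norm_nonneg _) (by positivity)
      rw [norm_div, hden]
      have hstep : ‖cosCoef q k * cosCoef q l * cosCoef q (-(k + l))‖ /
            (|(k:ℝ)| * |((k:ℝ) + (l:ℝ))|)
          ≤ ((M / |(k:ℝ)|) * B * (M / |((k:ℝ) + (l:ℝ))|)) /
            (|(k:ℝ)| * |((k:ℝ) + (l:ℝ))|) :=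
        div_le_div_of_nonneg_right hnum (by positivity) |>.trans_eq rfl
      refine hstep.trans_eq ?_
      rw [hadef, hDdef]
      simp only
      rw [show (((k + l : ℤ)):ℝ) = (k:ℝ) + (l:ℝ) by push_cast; ring,
        show ((k:ℝ))^2 = |(k:ℝ)|^2 from (sq_abs _).symm,
        show ((k:ℝ) + (l:ℝ))^2 = |((k:ℝ) + (l:ℝ))|^2 from (sq_abs _).symm]
      ring
    · rw [hFdef]
      simp only [if_neg h, norm_zero]
      have : 0 ≤ a k * a (k + l) := mul_nonneg (ha0 _) (ha0 _)
      positivity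
  have hFsum : Summable F := Summable.of_norm_bounded hGsum' hbound
  refine ⟨hFsum, ?_⟩
  -- symmetry argument
  set s : ℤ × ℤ ≃ ℤ × ℤ := Equiv.prodComm ℤ ℤ with hs
  set σ : ℤ × ℤ ≃ ℤ × ℤ :=
    ⟨fun p => (p.2, -(p.1 + p.2)), fun p => (-(p.1 + p.2), p.1),
      fun p => by simp, fun p => by simp⟩ with hσ
  have hkey : ∀ p : ℤ × ℤ, F p + F (s p) + F (σ p) = 0 := by
    rintro ⟨k, l⟩
    have := key_identity (cosCoef q) k l
    simpa [hFdef, hs, hσ] using this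
  have hsum2 : Summable (fun p => F (s p)) := s.summable_iff.2 hFsum
  have hsum3 : Summable (fun p => F (σ p)) := σ.summable_iff.2 hFsum
  have ht1 : ∑' p, F (s p) = ∑' p, F p := s.tsum_eq F
  have ht2 : ∑' p, F (σ p) = ∑' p, F p := σ.tsum_eq F
  have h3 : (3:ℂ) * ∑' p, F p = 0 := by
    calc (3:ℂ) * ∑' p, F p = (∑' p, F p) + (∑' p, F (s p)) + (∑' p, F (σ p)) := by
          rw [ht1, ht2]; ring
      _ = ∑' p, (F p + F (s p) + F (σ p)) := by
          rw [Summable.tsum_add (hFsum.add hsum2) hsum3, Summable.tsum_add hFsum hsum2]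
      _ = 0 := by
          have : (fun p : ℤ × ℤ => F p + F (s p) + F (σ p)) = fun _ => 0 := funext hkey
          rw [this, tsum_zero]
  have h30 : (3:ℂ) ≠ 0 := by norm_num
  exact (mul_eq_zero.1 h3).resolve_left h30
end

section
/- Let q be the Kronig–Penney potential and let Q(x) = ∫₀ˣ q(t) dt, so that Q(x) = ax for x ∈ [0,c] and Q(x) = bx − bπ for x ∈ (c,π]. Then for every positive integer n, −(1/π) ∫₀^π Q(x)² cos(2nx) dx = ( ab cos(2nc) )/(2n²) − ( (b² − a²) sin(2nc) )/(4πn³). -/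
open MeasureTheory Filter Asymptotics

section StmtEighteen
open Real intervalIntegral MeasureTheory

noncomputable def G (k β x : ℝ) : ℝ :=
  ((x+β)^2/k) * Real.sin (k*x) + (2*(x+β)/k^2) * Real.cos (k*x) - (2/k^3) * Real.sin (k*x)

lemma hasDerivAt_G (k β : ℝ) (hk : k ≠ 0) (x : ℝ) :
    HasDerivAt (G k β) ((x+β)^2 * Real.cos (k*x)) x := by
  have hkx : HasDerivAt (fun x : ℝ => k * x) k x := by
    simpa using (hasDerivAt_id x).const_mul k
  have hs : HasDerivAt (fun x => Real.sin (k*x)) (Real.cos (k*x) * k) x :=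
    (Real.hasDerivAt_sin (k*x)).comp x hkx
  have hco : HasDerivAt (fun x => Real.cos (k*x)) (-Real.sin (k*x) * k) x :=
    (Real.hasDerivAt_cos (k*x)).comp x hkx
  have h1 : HasDerivAt (fun x : ℝ => (x+β)^2/k) (2*(x+β)/k) x := by
    have : HasDerivAt (fun x : ℝ => (x+β)^2) (2*(x+β)) x := by
      simpa using (((hasDerivAt_id x).add_const β).fun_pow 2)
    simpa [div_eq_mul_inv, mul_comm, mul_assoc] using this.div_const k
  have h2 : HasDerivAt (fun x : ℝ => 2*(x+β)/k^2) (2/k^2) x := by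
    have : HasDerivAt (fun x : ℝ => 2*(x+β)) 2 x := by
      simpa using ((hasDerivAt_id x).add_const β).const_mul 2
    simpa using this.div_const (k^2)
  have := ((h1.fun_mul hs).fun_add (h2.fun_mul hco)).fun_sub (hs.const_mul (2/k^3))
  refine this.congr_deriv ?_
  field_simp
  ring

lemma integral_sq_cos (k β l u : ℝ) (hk : k ≠ 0) :
    ∫ x in l..u, (x+β)^2 * Real.cos (k*x) = G k β u - G k β l := by
  apply intervalIntegral.integral_eq_sub_of_hasDerivAt
    (fun x _ => hasDerivAt_G k β hk x)
  apply Continuous.intervalIntegrable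
  exact (((continuous_id.add continuous_const).pow 2).mul
    (Real.continuous_cos.comp (continuous_const.mul continuous_id)))


/-- For the Kronig–Penney potential, with `Q(x) = ∫₀ˣ q(t) dt`, for every
positive integer `n`,
`−(1/π)∫₀^π Q(x)² cos(2nx) dx = ab cos(2nc)/(2n²) − (b² − a²) sin(2nc)/(4πn³)`. -/
theorem stmt18
    (a b c : ℝ) (q : ℝ → ℝ)
    (hc : c ∈ Set.Ioo (0:ℝ) Real.pi) (ha : a < 0) (hb : 0 < b)
    (habc : (b - a) * c = b * Real.pi)
    (hqa : ∀ x ∈ Set.Icc (0:ℝ) c, q x = a)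
    (hqb : ∀ x ∈ Set.Ioc c Real.pi, q x = b)
    (n : ℕ) (hn : 1 ≤ n) :
    -(1 / Real.pi) *
        ∫ x in (0:ℝ)..Real.pi, (∫ t in (0:ℝ)..x, q t)^2 * Real.cos (2 * (n : ℝ) * x)
      = a * b * Real.cos (2 * (n : ℝ) * c) / (2 * (n : ℝ)^2) -
        (b^2 - a^2) * Real.sin (2 * (n : ℝ) * c) / (4 * Real.pi * (n : ℝ)^3) := by
  obtain ⟨hc0, hcπ⟩ := hc
  have hπ : (0:ℝ) < Real.pi := Real.pi_pos
  have hn0 : (0:ℝ) < (n:ℝ) := by exact_mod_cast hn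
  set k : ℝ := 2 * (n:ℝ) with hkdef
  have hk : k ≠ 0 := by positivity
  have hbc2 : b * c - b * Real.pi = a * c := by linear_combination habc
  -- Q on [0,c]
  have hQ1 : ∀ x ∈ Set.uIcc (0:ℝ) c, (∫ t in (0:ℝ)..x, q t) = a * x := by
    intro x hx
    rw [Set.uIcc_of_le hc0.le] at hx
    have : (∫ t in (0:ℝ)..x, q t) = ∫ t in (0:ℝ)..x, a := by
      apply intervalIntegral.integral_congr
      intro t ht
      rw [Set.uIcc_of_le hx.1] at ht
      exact hqa t ⟨ht.1, ht.2.trans hx.2⟩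
    rw [this, intervalIntegral.integral_const]
    simp [mul_comm]
  -- Q on [c,π]
  have hqi1 : IntervalIntegrable q volume 0 c := by
    apply (_root_.intervalIntegrable_const (c := a)).congr
    intro t ht
    rw [Set.uIoc_of_le hc0.le] at ht
    exact (hqa t ⟨ht.1.le, ht.2⟩).symm
  have hQ2 : ∀ x ∈ Set.uIcc c Real.pi, (∫ t in (0:ℝ)..x, q t) = b * x - b * Real.pi := by
    intro x hx
    rw [Set.uIcc_of_le hcπ.le] at hx
    have hqi2 : IntervalIntegrable q volume c x := by
      apply (_root_.intervalIntegrable_const (c := b)).congr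
      intro t ht
      rw [Set.uIoc_of_le hx.1] at ht
      exact (hqb t ⟨ht.1, ht.2.trans hx.2⟩).symm
    rw [← intervalIntegral.integral_add_adjacent_intervals hqi1 hqi2]
    have e1 : (∫ t in (0:ℝ)..c, q t) = a * c :=
      hQ1 c (by rw [Set.uIcc_of_le hc0.le]; exact ⟨hc0.le, le_refl c⟩)
    have e2 : (∫ t in c..x, q t) = b * (x - c) := by
      have : (∫ t in c..x, q t) = ∫ t in c..x, b := by
        apply intervalIntegral.integral_congr_ae
        apply ae_of_all
        intro t ht
        rw [Set.uIoc_of_le hx.1] at ht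
        exact hqb t ⟨ht.1, ht.2.trans hx.2⟩
      rw [this, intervalIntegral.integral_const]
      simp [mul_comm]
    rw [e1, e2]; linear_combination -hbc2
  -- integrability of the full integrand on the two pieces
  have hcont1 : Continuous (fun x : ℝ => (a*x)^2 * Real.cos (k * x)) :=
    ((continuous_const.mul continuous_id).pow 2).mul
      (Real.continuous_cos.comp (continuous_const.mul continuous_id))
  have hcont2 : Continuous (fun x : ℝ => (b*x - b*Real.pi)^2 * Real.cos (k * x)) :=
    (((continuous_const.mul continuous_id).sub continuous_const).pow 2).mul
      (Real.continuous_cos.comp (continuous_const.mul continuous_id))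
  have hi1 : IntervalIntegrable
      (fun x => (∫ t in (0:ℝ)..x, q t)^2 * Real.cos (k * x)) volume 0 c := by
    apply (hcont1.intervalIntegrable 0 c).congr
    intro x hx
    dsimp only
    rw [hQ1 x (Set.uIoc_subset_uIcc hx)]
  have hi2 : IntervalIntegrable
      (fun x => (∫ t in (0:ℝ)..x, q t)^2 * Real.cos (k * x)) volume c Real.pi := by
    apply (hcont2.intervalIntegrable c Real.pi).congr
    intro x hx
    dsimp only
    rw [hQ2 x (Set.uIoc_subset_uIcc hx)]
  rw [← intervalIntegral.integral_add_adjacent_intervals hi1 hi2]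
  have e1 : (∫ x in (0:ℝ)..c, (∫ t in (0:ℝ)..x, q t)^2 * Real.cos (k * x))
      = a^2 * ∫ x in (0:ℝ)..c, (x+0)^2 * Real.cos (k*x) := by
    rw [← intervalIntegral.integral_const_mul]
    apply intervalIntegral.integral_congr
    intro x hx
    dsimp only
    rw [hQ1 x hx]; ring
  have e2 : (∫ x in c..Real.pi, (∫ t in (0:ℝ)..x, q t)^2 * Real.cos (k * x))
      = b^2 * ∫ x in c..Real.pi, (x + -Real.pi)^2 * Real.cos (k*x) := by
    rw [← intervalIntegral.integral_const_mul]
    apply intervalIntegral.integral_congr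
    intro x hx
    dsimp only
    rw [hQ2 x hx]; ring
  rw [e1, e2, integral_sq_cos k 0 0 c hk, integral_sq_cos k (-Real.pi) c Real.pi hk]
  have hsπ : Real.sin (k * Real.pi) = 0 := by
    have h : k * Real.pi = ((2*n : ℕ) : ℝ) * Real.pi := by rw [hkdef]; push_cast; ring
    rw [h, Real.sin_nat_mul_pi]
  have hcosπ : Real.cos (k * Real.pi) = 1 := by
    have h : k * Real.pi = (n : ℝ) * (2 * Real.pi) := by rw [hkdef]; ring
    rw [h, Real.cos_nat_mul_two_pi]
  have hsq : (b * (c - Real.pi))^2 = (a * c)^2 := by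
    have h : b * (c - Real.pi) = a * c := by linear_combination hbc2
    rw [h]
  have key : a^2 * (G k 0 c - G k 0 0) + b^2 * (G k (-Real.pi) Real.pi - G k (-Real.pi) c)
      = -(a*b*Real.pi*Real.cos (k*c))/(2*(n:ℝ)^2) + (b^2-a^2)*Real.sin (k*c)/(4*(n:ℝ)^3) := by
    simp only [G, hsπ, hcosπ, mul_zero, zero_mul, Real.sin_zero, Real.cos_zero,
      add_zero, zero_add, mul_one, add_neg_cancel, neg_add_cancel, zero_pow, zero_div,
      ne_eq, OfNat.ofNat_ne_zero, not_false_iff, sub_zero]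
    rw [hkdef]
    linear_combination (-(Real.sin (2*(n:ℝ)*c))/(2*(n:ℝ))) * hsq +
      (-(a+b)*Real.cos (2*(n:ℝ)*c)/(2*(n:ℝ)^2)) * hbc2
  rw [key]
  have hπ' : Real.pi ≠ 0 := hπ.ne'
  have hn' : (n:ℝ) ≠ 0 := hn0.ne'
  rw [hkdef]
  field_simp
  ring

end StmtEighteen
end

section
/- Let (λ_n)_{n≥1} be a sequence of complex numbers with λ_n = n² + O(1/n). Then for all sufficiently large n, λ_n ≠ (n+k)² for every integer k ∉ {0, −2n}, and Σ_{k ∈ ℤ, k ≠ 0, k ≠ −2n} | 1/( λ_n − (n+k)² ) − 1/( n² − (n+k)² ) | = O(1/n³) as n → ∞. -/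
open Filter Asymptotics

lemma absKey (n : ℕ) (hn : 1 ≤ n) (k : ℤ) (hk : k ≠ 0) (hk2 : k ≠ -(2*(n:ℤ))) :
    (n:ℤ) ≤ |k| * |2*(n:ℤ)+k| := by
  have hN : (1:ℤ) ≤ n := by exact_mod_cast hn
  rcases lt_or_gt_of_ne hk with hk' | hk'
  · rcases lt_or_gt_of_ne (show 2*(n:ℤ)+k ≠ 0 by omega) with h2' | h2'
    · rw [abs_of_neg hk', abs_of_neg h2']
      nlinarith [mul_nonneg (show (0:ℤ) ≤ -k-(2*n+1) by omega) (show (0:ℤ) ≤ -(2*n+k)-1 by omega)]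
    · rw [abs_of_neg hk', abs_of_pos h2']
      nlinarith [mul_nonneg (show (0:ℤ) ≤ -k-1 by omega) (show (0:ℤ) ≤ 2*n+k-1 by omega)]
  · rw [abs_of_pos hk', abs_of_pos (show (0:ℤ) < 2*n+k by omega)]
    nlinarith [mul_nonneg (show (0:ℤ) ≤ k-1 by omega) (show (0:ℤ) ≤ 2*n+k-(2*n+1) by omega)]

lemma arith (C nr x y : ℝ) (hC : 0 < C) (hn : 0 < nr) (hx : x ≠ 0) (hy : y ≠ 0)
    (hyx : y = x + 2*nr) :
    2*C/(nr*(x^2*y^2)) ≤ C/nr^3 * (1/x^2 + 1/y^2) := by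
  subst hyx
  have h1 : 2*nr^2 ≤ x^2 + (x+2*nr)^2 := by nlinarith [sq_nonneg (x+nr)]
  have e : C/nr^3 * (1/x^2+1/(x+2*nr)^2) = C*(x^2+(x+2*nr)^2)/(nr^3 * (x^2*(x+2*nr)^2)) := by
    rw [div_add_div _ _ (pow_ne_zero 2 hx) (pow_ne_zero 2 hy), div_mul_div_comm]
    try ring
    try tauto
  rw [e, div_le_div_iff₀ (by positivity) (by positivity)]
  have h2 : 0 ≤ C*(nr*(x^2*(x+2*nr)^2)) := by positivity
  have h3 := mul_le_mul_of_nonneg_left h1 h2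
  nlinarith [h3]

set_option maxHeartbeats 1000000 in
lemma core (n : ℕ) (C : ℝ) (hC1 : 1 ≤ C) (hn : 1 ≤ n) (hn2 : 2*C ≤ (n:ℝ)^2)
    (lamn : ℂ) (hb : ‖lamn - (n:ℂ)^2‖ ≤ C / n) (k : ℤ) (hk : k ≠ 0) (hk2 : k ≠ -(2*(n:ℤ))) :
    lamn ≠ ((n:ℂ)+(k:ℂ))^2 ∧
    ‖1/(lamn - ((n:ℂ)+(k:ℂ))^2) - 1/((n:ℂ)^2 - ((n:ℂ)+(k:ℂ))^2)‖ ≤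
      (C/(n:ℝ)^3) * (1/(k:ℝ)^2 + 1/((k:ℝ)+2*(n:ℝ))^2) := by
  have hnR : (1:ℝ) ≤ n := by exact_mod_cast hn
  have hCpos : (0:ℝ) < C := lt_of_lt_of_le one_pos hC1
  set d : ℂ := (n:ℂ)^2 - ((n:ℂ)+(k:ℂ))^2 with hd_def
  set ε : ℂ := lamn - (n:ℂ)^2 with hε_def
  set D : ℂ := lamn - ((n:ℂ)+(k:ℂ))^2 with hD_def
  have hDd : D = d + ε := by rw [hd_def, hε_def, hD_def]; ring
  -- norm of d
  have hdint : d = ((-(k*(2*(n:ℤ)+k)) : ℤ) : ℂ) := by push_cast; ring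
  have hdnorm : ‖d‖ = |(k:ℝ)| * |(k:ℝ)+2*(n:ℝ)| := by
    rw [hdint, Complex.norm_intCast]
    push_cast [abs_mul, abs_neg]
    ring_nf
  have hdge : (n:ℝ) ≤ ‖d‖ := by
    rw [hdnorm]
    have := absKey n hn k hk hk2
    have h2 : ((n:ℤ):ℝ) ≤ (|k| * |2*(n:ℤ)+k| : ℤ) := by exact_mod_cast this
    push_cast [abs_mul] at h2 ⊢
    calc (n:ℝ) ≤ |(k:ℝ)| * |2*(n:ℝ)+(k:ℝ)| := by convert h2 using 3 <;> push_cast <;> ring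
    _ = |(k:ℝ)| * |(k:ℝ)+2*(n:ℝ)| := by ring_nf
  have hεle : ‖ε‖ ≤ (n:ℝ)/2 := by
    have : C / n ≤ (n:ℝ)/2 := by
      rw [div_le_div_iff₀ (by positivity) (by norm_num)]; nlinarith
    linarith [hb]
  have hDge : ‖d‖/2 ≤ ‖D‖ := by
    have h1 : ‖d‖ ≤ ‖D‖ + ‖ε‖ := by
      calc ‖d‖ = ‖D - ε‖ := by rw [hDd]; ring_nf
      _ ≤ ‖D‖ + ‖ε‖ := norm_sub_le _ _
    have : ‖ε‖ ≤ ‖d‖/2 := le_trans hεle (by linarith)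
    linarith
  have hdpos : (0:ℝ) < ‖d‖ := lt_of_lt_of_le (by linarith) hdge
  have hDpos : (0:ℝ) < ‖D‖ := lt_of_lt_of_le (by positivity) hDge
  have hdne : d ≠ 0 := by intro h; rw [h] at hdpos; simp at hdpos
  have hDne : D ≠ 0 := by intro h; rw [h] at hDpos; simp at hDpos
  constructor
  · intro h; exact hDne (by rw [hD_def, h]; ring)
  -- the difference
  have hdiff : 1/D - 1/d = -ε/(D*d) := by
    field_simp
    rw [hDd]; ring
  have hnormdiff : ‖1/D - 1/d‖ = ‖ε‖/(‖D‖*‖d‖) := by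
    rw [hdiff, norm_div, norm_neg, norm_mul]
  rw [show (1/(lamn - ((n:ℂ)+(k:ℂ))^2) - 1/((n:ℂ)^2 - ((n:ℂ)+(k:ℂ))^2)) = 1/D - 1/d from rfl,
    hnormdiff]
  -- bound
  set x : ℝ := (k:ℝ) with hx
  set y : ℝ := (k:ℝ) + 2*(n:ℝ) with hy
  have hxne : x ≠ 0 := by simpa [hx] using (Int.cast_ne_zero (α := ℝ)).mpr hk
  have hyne : y ≠ 0 := by
    rw [hy]
    intro h
    apply hk2
    have : (k:ℝ) = ((-(2*(n:ℤ)) : ℤ) : ℝ) := by push_cast; linarith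
    exact_mod_cast this
  have hstep1 : ‖ε‖/(‖D‖*‖d‖) ≤ (C/n)/((‖d‖/2)*‖d‖) := by
    apply div_le_div₀ (by positivity) hb (by positivity)
    exact mul_le_mul_of_nonneg_right hDge (le_of_lt hdpos)
  have hd2 : ‖d‖^2 = x^2*y^2 := by
    rw [hdnorm]; rw [mul_pow, sq_abs, sq_abs]
  have hstep2 : (C/n)/((‖d‖/2)*‖d‖) = 2*C/((n:ℝ)*(x^2*y^2)) := by
    rw [← hd2]; field_simp
  have hyx : y = x + 2*(n:ℝ) := by rw [hx, hy]
  have hstep3 : 2*C/((n:ℝ)*(x^2*y^2)) ≤ C/(n:ℝ)^3 * (1/x^2 + 1/y^2) :=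
    arith C (n:ℝ) x y hCpos (by positivity) hxne hyne hyx
  linarith

/-- Let `(λ_n)` be a sequence of complex numbers with `λ_n = n² + O(1/n)`.
Then for all sufficiently large `n`, `λ_n ≠ (n+k)²` for every integer `k ∉ {0, −2n}`, and
`Σ_{k ≠ 0, −2n} |1/(λ_n − (n+k)²) − 1/(n² − (n+k)²)| = O(1/n³)` as `n → ∞`. -/
theorem stmt19 (lam : ℕ → ℂ)
    (hlam : (fun n : ℕ => lam n - ((n : ℂ))^2) =O[atTop] fun n : ℕ => 1 / (n : ℝ)) :
    (∀ᶠ n : ℕ in atTop, ∀ k : ℤ, k ≠ 0 → k ≠ -(2 * (n : ℤ)) →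
        lam n ≠ ((n : ℂ) + (k : ℂ))^2) ∧
    (fun n : ℕ => ∑' k : ℤ,
        if k ≠ 0 ∧ k ≠ -(2 * (n : ℤ)) then
          ‖1 / (lam n - ((n : ℂ) + (k : ℂ))^2) -
            1 / (((n : ℂ))^2 - ((n : ℂ) + (k : ℂ))^2)‖
        else 0)
      =O[atTop] fun n : ℕ => 1 / (n : ℝ)^3 := by

  obtain ⟨C₀, hC₀⟩ := isBigO_iff.mp hlam
  set C : ℝ := max C₀ 1 with hCdef
  have hC1 : (1:ℝ) ≤ C := le_max_right _ _
  have hCpos : (0:ℝ) < C := lt_of_lt_of_le one_pos hC1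
  have hev : ∀ᶠ n : ℕ in atTop, 1 ≤ n ∧ 2*C ≤ (n:ℝ)^2 ∧ ‖lam n - (n:ℂ)^2‖ ≤ C / n := by
    have h1 : ∀ᶠ n:ℕ in atTop, 1 ≤ n := eventually_ge_atTop 1
    have h2 : ∀ᶠ n:ℕ in atTop, 2*C ≤ (n:ℝ) :=
      (tendsto_natCast_atTop_atTop (R := ℝ)).eventually_ge_atTop (2*C)
    filter_upwards [h1, h2, hC₀] with n hn1 hn2 hb
    have hnR : (1:ℝ) ≤ (n:ℝ) := by exact_mod_cast hn1
    refine ⟨hn1, by nlinarith, ?_⟩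
    calc ‖lam n - (n:ℂ)^2‖ ≤ C₀ * ‖1/(n:ℝ)‖ := hb
    _ ≤ C * (1/(n:ℝ)) := by
        rw [Real.norm_of_nonneg (by positivity)]
        exact mul_le_mul_of_nonneg_right (le_max_left _ _) (by positivity)
    _ = C / n := by rw [mul_one_div]
  constructor
  · filter_upwards [hev] with n hn k hk hk2
    exact (core n C hC1 hn.1 hn.2.1 (lam n) hn.2.2 k hk hk2).1
  · rw [isBigO_iff]
    set S : ℝ := ∑' k:ℤ, 1/((k:ℝ))^2 with hSdef
    have hS1 : Summable (fun k:ℤ => 1/((k:ℝ))^2) := Real.summable_one_div_int_pow.mpr one_lt_two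
    have hSnn : 0 ≤ S := tsum_nonneg (fun k => by positivity)
    refine ⟨2*C*S, ?_⟩
    filter_upwards [hev] with n hn
    obtain ⟨hn1, hn2, hb⟩ := hn
    have hnR : (1:ℝ) ≤ (n:ℝ) := by exact_mod_cast hn1
    have hS2 : Summable (fun k:ℤ => 1/((k:ℝ)+2*(n:ℝ))^2) := by
      have := (Equiv.addRight (2*(n:ℤ))).summable_iff.mpr hS1
      apply this.congr
      intro k
      simp only [Equiv.coe_addRight, Function.comp_apply]
      push_cast
      ring_nf
    set g : ℤ → ℝ := fun k => (C/(n:ℝ)^3) * (1/(k:ℝ)^2 + 1/((k:ℝ)+2*(n:ℝ))^2) with hgdef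
    have hg : Summable g := (hS1.add hS2).mul_left _
    set f : ℤ → ℝ := fun k =>
        if k ≠ 0 ∧ k ≠ -(2*(n:ℤ)) then
          ‖1 / (lam n - ((n:ℂ) + (k:ℂ))^2) - 1 / (((n:ℂ))^2 - ((n:ℂ) + (k:ℂ))^2)‖
        else 0 with hfdef
    have hfnn : ∀ k, 0 ≤ f k := by
      intro k; rw [hfdef]; dsimp only
      split
      · exact norm_nonneg _
      · exact le_refl 0
    have hfg : ∀ k, f k ≤ g k := by
      intro k; rw [hfdef, hgdef]; dsimp only
      split
      · next h =>
          exact (core n C hC1 hn1 hn2 (lam n) hb k h.1 h.2).2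
      · positivity
    have hf : Summable f := hg.of_nonneg_of_le hfnn hfg
    have htsum : ∑' k, f k ≤ ∑' k, g k := Summable.tsum_le_tsum hfg hf hg
    have hgsum : ∑' k, g k = (C/(n:ℝ)^3) * (S + S) := by
      rw [hgdef, tsum_mul_left, Summable.tsum_add hS1 hS2, hSdef]
      congr 2
      have := (Equiv.addRight (2*(n:ℤ))).tsum_eq (fun k:ℤ => 1/((k:ℝ))^2)
      rw [← this]
      apply tsum_congr
      intro k
      simp only [Equiv.coe_addRight]
      push_cast
      ring_nf
    have hnorm1 : ‖1/((n:ℝ))^3‖ = 1/(n:ℝ)^3 := Real.norm_of_nonneg (by positivity)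
    rw [Real.norm_of_nonneg (tsum_nonneg hfnn), hnorm1]
    calc ∑' k, f k ≤ (C/(n:ℝ)^3) * (S + S) := by rw [← hgsum]; exact htsum
    _ = 2*C*S * (1/(n:ℝ)^3) := by ring
end
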